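/- arXiv:0712.2549 — 6 statements merged into one kernel-verified Lean document; each statement's English description precedes it below -/
import Mathlib

section
/- Let B be a right double extension of A with data (P, σ, δ, τ). Then σ is a k-algebra homomorphism from A to the 2×2 matrix algebra M₂(A): σᵢⱼ(1) = 1 if i = j and 0 if i ≠ j, and σᵢⱼ(rs) = σᵢ₁(r)σ₁ⱼ(s) + σᵢ₂(r)σ₂ⱼ(s) for all r, s ∈ A and i, j ∈ {1,2}; and δ is a σ-derivation: δᵢ(1) = 0 and δᵢ(rs) = σᵢ₁(r)δ₁(s) + σᵢ₂(r)δ₂(s) + δᵢ(r)·s for all r, s ∈ A and i = 1, 2. -/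
/-- A right double extension `B` of a subalgebra `A ⊆ B` with DE-data `(P, σ, δ, τ)`:
(R1) `y₂y₁ = p₁₂·y₁y₂ + p₁₁·y₁² + τ₁y₁ + τ₂y₂ + τ₀`;
(R2) `yᵢ·r = σᵢ₁(r)y₁ + σᵢ₂(r)y₂ + δᵢ(r)` for all `r ∈ A`, `i = 1, 2`;
(Basis) the monomials `y₁^{n₁}y₂^{n₂}` form a basis of `B` as a left `A`-module, i.e.
every element of `B` is uniquely a finite `A`-linear combination of the
`y₁^{n₁}y₂^{n₂}`. -/
structure RightDoubleExtension (k : Type*) [Field k] {B : Type*} [Ring B] [Algebra k B]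
    (A : Subalgebra k B) where
  y₁ : B
  y₂ : B
  σ₁₁ : A →ₗ[k] A
  σ₁₂ : A →ₗ[k] A
  σ₂₁ : A →ₗ[k] A
  σ₂₂ : A →ₗ[k] A
  δ₁ : A →ₗ[k] A
  δ₂ : A →ₗ[k] A
  p₁₂ : k
  p₁₁ : k
  τ₁ : A
  τ₂ : A
  τ₀ : A
  R1 : y₂ * y₁ = p₁₂ • (y₁ * y₂) + p₁₁ • (y₁ * y₁)
      + (τ₁ : B) * y₁ + (τ₂ : B) * y₂ + (τ₀ : B)
  R2₁ : ∀ r : A, y₁ * (r : B) = (σ₁₁ r : B) * y₁ + (σ₁₂ r : B) * y₂ + (δ₁ r : B)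
  R2₂ : ∀ r : A, y₂ * (r : B) = (σ₂₁ r : B) * y₁ + (σ₂₂ r : B) * y₂ + (δ₂ r : B)
  basis : ∀ b : B, ∃! f : ℕ × ℕ →₀ A,
      b = f.sum fun n a => (a : B) * (y₁ ^ n.1 * y₂ ^ n.2)


theorem key_aux
    {k : Type*} [Field k] {B : Type*} [Ring B] [Algebra k B]
    {A : Subalgebra k B} (E : RightDoubleExtension k A)
    (a b c a' b' c' : A)
    (h : (a : B) * E.y₁ + (b : B) * E.y₂ + (c : B)
       = (a' : B) * E.y₁ + (b' : B) * E.y₂ + (c' : B)) :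
    a = a' ∧ b = b' ∧ c = c' := by
  classical
  set F : A → A → A → (ℕ × ℕ →₀ A) := fun x y z =>
    Finsupp.single (1,0) x + Finsupp.single (0,1) y + Finsupp.single (0,0) z with hFdef
  have hF : ∀ x y z : A, (F x y z).sum (fun n a => (a : B) * (E.y₁ ^ n.1 * E.y₂ ^ n.2))
      = (x : B) * E.y₁ + (y : B) * E.y₂ + (z : B) := by
    intro x y z
    rw [hFdef]
    rw [Finsupp.sum_add_index' (by intro i; simp) (by intro i u v; push_cast; exact add_mul _ _ _),
        Finsupp.sum_add_index' (by intro i; simp) (by intro i u v; push_cast; exact add_mul _ _ _),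
        Finsupp.sum_single_index (by simp), Finsupp.sum_single_index (by simp),
        Finsupp.sum_single_index (by simp)]
    simp
  obtain ⟨f, hf, huniq⟩ := E.basis ((a : B) * E.y₁ + (b : B) * E.y₂ + (c : B))
  have h1 : F a b c = f := huniq _ (hF a b c).symm
  have h2 : F a' b' c' = f := huniq _ (by rw [h]; exact (hF a' b' c').symm)
  have heq : F a b c = F a' b' c' := h1.trans h2.symm
  refine ⟨?_, ?_, ?_⟩
  · have := DFunLike.congr_fun heq (1,0)
    simpa [hFdef, Finsupp.single_apply, Prod.ext_iff] using this
  · have := DFunLike.congr_fun heq (0,1)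
    simpa [hFdef, Finsupp.single_apply, Prod.ext_iff] using this
  · have := DFunLike.congr_fun heq (0,0)
    simpa [hFdef, Finsupp.single_apply, Prod.ext_iff] using this
/-- In a right double extension, `σ` is a `k`-algebra homomorphism `A → M₂(A)` and
`δ` is a `σ`-derivation. -/
theorem sigma_algHom_delta_derivation
    {k : Type*} [Field k] {B : Type*} [Ring B] [Algebra k B]
    {A : Subalgebra k B} (E : RightDoubleExtension k A) :
    (E.σ₁₁ 1 = 1 ∧ E.σ₁₂ 1 = 0 ∧ E.σ₂₁ 1 = 0 ∧ E.σ₂₂ 1 = 1) ∧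
    (∀ r s : A,
      E.σ₁₁ (r * s) = E.σ₁₁ r * E.σ₁₁ s + E.σ₁₂ r * E.σ₂₁ s ∧
      E.σ₁₂ (r * s) = E.σ₁₁ r * E.σ₁₂ s + E.σ₁₂ r * E.σ₂₂ s ∧
      E.σ₂₁ (r * s) = E.σ₂₁ r * E.σ₁₁ s + E.σ₂₂ r * E.σ₂₁ s ∧
      E.σ₂₂ (r * s) = E.σ₂₁ r * E.σ₁₂ s + E.σ₂₂ r * E.σ₂₂ s) ∧
    (E.δ₁ 1 = 0 ∧ E.δ₂ 1 = 0) ∧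
    (∀ r s : A,
      E.δ₁ (r * s) = E.σ₁₁ r * E.δ₁ s + E.σ₁₂ r * E.δ₂ s + E.δ₁ r * s ∧
      E.δ₂ (r * s) = E.σ₂₁ r * E.δ₁ s + E.σ₂₂ r * E.δ₂ s + E.δ₂ r * s) := by
  have u1 : E.σ₁₁ 1 = 1 ∧ E.σ₁₂ 1 = 0 ∧ E.δ₁ 1 = 0 := by
    apply key_aux E
    rw [← E.R2₁ 1]; push_cast; noncomm_ring
  have u2 : E.σ₂₁ 1 = 0 ∧ E.σ₂₂ 1 = 1 ∧ E.δ₂ 1 = 0 := by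
    apply key_aux E
    rw [← E.R2₂ 1]; push_cast; noncomm_ring
  have m1 : ∀ r s : A, E.σ₁₁ (r * s) = E.σ₁₁ r * E.σ₁₁ s + E.σ₁₂ r * E.σ₂₁ s ∧
      E.σ₁₂ (r * s) = E.σ₁₁ r * E.σ₁₂ s + E.σ₁₂ r * E.σ₂₂ s ∧
      E.δ₁ (r * s) = E.σ₁₁ r * E.δ₁ s + E.σ₁₂ r * E.δ₂ s + E.δ₁ r * s := by
    intro r s
    apply key_aux E
    rw [← E.R2₁ (r * s)]
    calc E.y₁ * ((r * s : A) : B) = (E.y₁ * r) * s := by push_cast; rw [mul_assoc]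
    _ = ((E.σ₁₁ r : B) * E.y₁ + (E.σ₁₂ r : B) * E.y₂ + (E.δ₁ r : B)) * s := by
        rw [E.R2₁ r]
    _ = (E.σ₁₁ r : B) * (E.y₁ * s) + (E.σ₁₂ r : B) * (E.y₂ * s) + (E.δ₁ r : B) * s := by
        noncomm_ring
    _ = _ := by rw [E.R2₁ s, E.R2₂ s]; push_cast; noncomm_ring
  have m2 : ∀ r s : A, E.σ₂₁ (r * s) = E.σ₂₁ r * E.σ₁₁ s + E.σ₂₂ r * E.σ₂₁ s ∧
      E.σ₂₂ (r * s) = E.σ₂₁ r * E.σ₁₂ s + E.σ₂₂ r * E.σ₂₂ s ∧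
      E.δ₂ (r * s) = E.σ₂₁ r * E.δ₁ s + E.σ₂₂ r * E.δ₂ s + E.δ₂ r * s := by
    intro r s
    apply key_aux E
    rw [← E.R2₂ (r * s)]
    calc E.y₂ * ((r * s : A) : B) = (E.y₂ * r) * s := by push_cast; rw [mul_assoc]
    _ = ((E.σ₂₁ r : B) * E.y₁ + (E.σ₂₂ r : B) * E.y₂ + (E.δ₂ r : B)) * s := by
        rw [E.R2₂ r]
    _ = (E.σ₂₁ r : B) * (E.y₁ * s) + (E.σ₂₂ r : B) * (E.y₂ * s) + (E.δ₂ r : B) * s := by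
        noncomm_ring
    _ = _ := by rw [E.R2₁ s, E.R2₂ s]; push_cast; noncomm_ring
  exact ⟨⟨u1.1, u1.2.1, u2.1, u2.2.1⟩,
    fun r s => ⟨(m1 r s).1, (m1 r s).2.1, (m2 r s).1, (m2 r s).2.1⟩,
    ⟨u1.2.2, u2.2.2⟩,
    fun r s => ⟨(m1 r s).2.2, (m2 r s).2.2⟩⟩
end

section
/- Let B be a right double extension of A with data (P, σ, δ, τ). Then σ is invertible if and only if both of the following hold: (i) A·y₁ + A·y₂ + A = y₁·A + y₂·A + A as subsets of B, and (ii) whenever a, b, c ∈ A satisfy y₁a + y₂b + c = 0 in B, then a = b = c = 0 (i.e. {1, y₁, y₂} is a basis of this set as a right A-module). In particular, if B is also a left double extension (a double extension), then σ is invertible. -/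
/-- `σ` is invertible: there is a `k`-algebra homomorphism `φ = (φᵢⱼ) : A → M₂(A)` with
`φⱼ₁σᵢ₁ + φⱼ₂σᵢ₂ = δᵢⱼ · id` and `σ₁ⱼφ₁ᵢ + σ₂ⱼφ₂ᵢ = δᵢⱼ · id`. -/
def SigmaInvertible {k : Type*} [Field k] {B : Type*} [Ring B] [Algebra k B]
    {A : Subalgebra k B} (E : RightDoubleExtension k A) : Prop :=
  ∃ φ₁₁ φ₁₂ φ₂₁ φ₂₂ : A →ₗ[k] A,
    (φ₁₁ 1 = 1 ∧ φ₁₂ 1 = 0 ∧ φ₂₁ 1 = 0 ∧ φ₂₂ 1 = 1) ∧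
    (∀ r s : A,
      φ₁₁ (r * s) = φ₁₁ r * φ₁₁ s + φ₁₂ r * φ₂₁ s ∧
      φ₁₂ (r * s) = φ₁₁ r * φ₁₂ s + φ₁₂ r * φ₂₂ s ∧
      φ₂₁ (r * s) = φ₂₁ r * φ₁₁ s + φ₂₂ r * φ₂₁ s ∧
      φ₂₂ (r * s) = φ₂₁ r * φ₁₂ s + φ₂₂ r * φ₂₂ s) ∧
    (∀ r : A,
      φ₁₁ (E.σ₁₁ r) + φ₁₂ (E.σ₁₂ r) = r ∧
      φ₂₁ (E.σ₁₁ r) + φ₂₂ (E.σ₁₂ r) = 0 ∧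
      φ₁₁ (E.σ₂₁ r) + φ₁₂ (E.σ₂₂ r) = 0 ∧
      φ₂₁ (E.σ₂₁ r) + φ₂₂ (E.σ₂₂ r) = r) ∧
    (∀ r : A,
      E.σ₁₁ (φ₁₁ r) + E.σ₂₁ (φ₂₁ r) = r ∧
      E.σ₁₂ (φ₁₁ r) + E.σ₂₂ (φ₂₁ r) = 0 ∧
      E.σ₁₁ (φ₁₂ r) + E.σ₂₁ (φ₂₂ r) = 0 ∧
      E.σ₁₂ (φ₁₂ r) + E.σ₂₂ (φ₂₂ r) = r)


section Helpers
variable {k : Type*} [Field k] {B : Type*} [Ring B] [Algebra k B] {A : Subalgebra k B}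

lemma RDE.leftUniq (E : RightDoubleExtension k A) (a b c : A)
    (h : (a : B) * E.y₁ + (b : B) * E.y₂ + (c : B) = 0) : a = 0 ∧ b = 0 ∧ c = 0 := by
  obtain ⟨f, hf, huniq⟩ := E.basis 0
  set F : ℕ × ℕ → A → B := fun n x => (x : B) * (E.y₁ ^ n.1 * E.y₂ ^ n.2) with hF
  have hz : ∀ n : ℕ × ℕ, F n 0 = 0 := by intro n; simp [hF]
  have hadd : ∀ (n : ℕ × ℕ) (x y : A), F n (x + y) = F n x + F n y := by
    intro n x y; simp [hF, add_mul]
  set g : ℕ × ℕ →₀ A := Finsupp.single (1,0) a + (Finsupp.single (0,1) b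
      + Finsupp.single (0,0) c) with hg
  have hgsum : g.sum F = (a : B) * E.y₁ + (b : B) * E.y₂ + (c : B) := by
    rw [hg, Finsupp.sum_add_index' hz hadd, Finsupp.sum_add_index' hz hadd,
        Finsupp.sum_single_index (hz _), Finsupp.sum_single_index (hz _),
        Finsupp.sum_single_index (hz _)]
    simp [hF, add_assoc]
  have hgf : g = f := huniq g (by show _ = g.sum F; rw [hgsum, h])
  have h0f : (0 : ℕ × ℕ →₀ A) = f := huniq 0 (by simp)
  have hg0 : g = 0 := hgf.trans h0f.symm
  have e : ∀ p : ℕ × ℕ, g p = 0 := fun p => by rw [hg0]; rfl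
  refine ⟨?_, ?_, ?_⟩
  · have := e (1,0); simpa [hg, Finsupp.single_apply, Prod.ext_iff] using this
  · have := e (0,1); simpa [hg, Finsupp.single_apply, Prod.ext_iff] using this
  · have := e (0,0); simpa [hg, Finsupp.single_apply, Prod.ext_iff] using this

lemma RDE.leftUniq' (E : RightDoubleExtension k A) (a b c a' b' c' : A)
    (h : (a : B) * E.y₁ + (b : B) * E.y₂ + (c : B)
        = (a' : B) * E.y₁ + (b' : B) * E.y₂ + (c' : B)) :
    a = a' ∧ b = b' ∧ c = c' := by
  have hz : ((a - a' : A) : B) * E.y₁ + ((b - b' : A) : B) * E.y₂ + ((c - c' : A) : B)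
      = ((a : B) * E.y₁ + (b : B) * E.y₂ + (c : B))
        - ((a' : B) * E.y₁ + (b' : B) * E.y₂ + (c' : B)) := by
    push_cast; noncomm_ring
  rw [h, sub_self] at hz
  obtain ⟨h1, h2, h3⟩ := RDE.leftUniq E _ _ _ hz
  exact ⟨sub_eq_zero.mp h1, sub_eq_zero.mp h2, sub_eq_zero.mp h3⟩

lemma RDE.rightUniq (E : RightDoubleExtension k A)
    (hb : ∀ b : B, ∃! f : ℕ × ℕ →₀ A,
        b = f.sum fun n x => (E.y₂ ^ n.1 * E.y₁ ^ n.2) * (x : B))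
    (a b c : A)
    (h : E.y₁ * (a : B) + E.y₂ * (b : B) + (c : B) = 0) : a = 0 ∧ b = 0 ∧ c = 0 := by
  obtain ⟨f, hf, huniq⟩ := hb 0
  set F : ℕ × ℕ → A → B := fun n x => (E.y₂ ^ n.1 * E.y₁ ^ n.2) * (x : B) with hF
  have hz : ∀ n : ℕ × ℕ, F n 0 = 0 := by intro n; simp [hF]
  have hadd : ∀ (n : ℕ × ℕ) (x y : A), F n (x + y) = F n x + F n y := by
    intro n x y; simp [hF, mul_add]
  set g : ℕ × ℕ →₀ A := Finsupp.single (0,1) a + (Finsupp.single (1,0) b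
      + Finsupp.single (0,0) c) with hg
  have hgsum : g.sum F = E.y₁ * (a : B) + E.y₂ * (b : B) + (c : B) := by
    rw [hg, Finsupp.sum_add_index' hz hadd, Finsupp.sum_add_index' hz hadd,
        Finsupp.sum_single_index (hz _), Finsupp.sum_single_index (hz _),
        Finsupp.sum_single_index (hz _)]
    simp [hF, add_assoc]
  have hgf : g = f := huniq g (by show _ = g.sum F; rw [hgsum, h])
  have h0f : (0 : ℕ × ℕ →₀ A) = f := huniq 0 (by simp)
  have hg0 : g = 0 := hgf.trans h0f.symm
  have e : ∀ p : ℕ × ℕ, g p = 0 := fun p => by rw [hg0]; rfl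
  refine ⟨?_, ?_, ?_⟩
  · have := e (0,1); simpa [hg, Finsupp.single_apply, Prod.ext_iff] using this
  · have := e (1,0); simpa [hg, Finsupp.single_apply, Prod.ext_iff] using this
  · have := e (0,0); simpa [hg, Finsupp.single_apply, Prod.ext_iff] using this

end Helpers


set_option maxHeartbeats 3200000 in
/-- `σ` is invertible iff `Ay₁ + Ay₂ + A = y₁A + y₂A + A` and `{1, y₁, y₂}` is a right
`A`-basis of this set; in particular if `B` is also a left double extension (i.e. a
double extension) then `σ` is invertible. -/
theorem sigmaInvertible_iff
    {k : Type*} [Field k] {B : Type*} [Ring B] [Algebra k B]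
    {A : Subalgebra k B} (E : RightDoubleExtension k A) :
    (SigmaInvertible E ↔
      (({w : B | ∃ a b c : A, w = (a : B) * E.y₁ + (b : B) * E.y₂ + (c : B)} =
        {w : B | ∃ a b c : A, w = E.y₁ * (a : B) + E.y₂ * (b : B) + (c : B)}) ∧
       (∀ a b c : A, E.y₁ * (a : B) + E.y₂ * (b : B) + (c : B) = 0 →
          a = 0 ∧ b = 0 ∧ c = 0))) ∧
    (((∃ p'₁₂ p'₁₁ : k, ∃ τ'₁ τ'₂ τ'₀ : A,
        E.y₁ * E.y₂ = p'₁₂ • (E.y₂ * E.y₁) + p'₁₁ • (E.y₁ * E.y₁)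
          + E.y₁ * (τ'₁ : B) + E.y₂ * (τ'₂ : B) + (τ'₀ : B)) ∧
      (∀ b : B, ∃! f : ℕ × ℕ →₀ A,
        b = f.sum fun n a => (E.y₂ ^ n.1 * E.y₁ ^ n.2) * (a : B)) ∧
      (∀ r : A, ∃ a b c : A,
        (r : B) * E.y₁ = E.y₁ * (a : B) + E.y₂ * (b : B) + (c : B)) ∧
      (∀ r : A, ∃ a b c : A,
        (r : B) * E.y₂ = E.y₁ * (a : B) + E.y₂ * (b : B) + (c : B))) →
      SigmaInvertible E) := by
  have hiff : SigmaInvertible E ↔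
      (({w : B | ∃ a b c : A, w = (a : B) * E.y₁ + (b : B) * E.y₂ + (c : B)} =
        {w : B | ∃ a b c : A, w = E.y₁ * (a : B) + E.y₂ * (b : B) + (c : B)}) ∧
       (∀ a b c : A, E.y₁ * (a : B) + E.y₂ * (b : B) + (c : B) = 0 →
          a = 0 ∧ b = 0 ∧ c = 0)) := by
    constructor
    · rintro ⟨φ11, φ12, φ21, φ22, hone, hmul, hφσ, hσφ⟩
      have L1 : ∀ a : A, (a : B) * E.y₁
          = E.y₁ * ((φ11 a : A) : B) + E.y₂ * ((φ21 a : A) : B)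
            - ((E.δ₁ (φ11 a) + E.δ₂ (φ21 a) : A) : B) := by
        intro a
        have e1 : E.σ₁₁ (φ11 a) = a - E.σ₂₁ (φ21 a) := eq_sub_of_add_eq (hσφ a).1
        have e2 : E.σ₁₂ (φ11 a) = -E.σ₂₂ (φ21 a) := eq_neg_of_add_eq_zero_left (hσφ a).2.1
        rw [E.R2₁ (φ11 a), E.R2₂ (φ21 a), e1, e2]
        push_cast
        noncomm_ring
      have L2 : ∀ a : A, (a : B) * E.y₂
          = E.y₁ * ((φ12 a : A) : B) + E.y₂ * ((φ22 a : A) : B)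
            - ((E.δ₁ (φ12 a) + E.δ₂ (φ22 a) : A) : B) := by
        intro a
        have e1 : E.σ₁₁ (φ12 a) = -E.σ₂₁ (φ22 a) := eq_neg_of_add_eq_zero_left (hσφ a).2.2.1
        have e2 : E.σ₁₂ (φ12 a) = a - E.σ₂₂ (φ22 a) := eq_sub_of_add_eq (hσφ a).2.2.2
        rw [E.R2₁ (φ12 a), E.R2₂ (φ22 a), e1, e2]
        push_cast
        noncomm_ring
      constructor
      · ext w
        constructor
        · rintro ⟨a, b, c, rfl⟩
          exact ⟨φ11 a + φ12 b, φ21 a + φ22 b,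
            c - (E.δ₁ (φ11 a) + E.δ₂ (φ21 a)) - (E.δ₁ (φ12 b) + E.δ₂ (φ22 b)),
            by rw [L1 a, L2 b]; push_cast; noncomm_ring⟩
        · rintro ⟨a, b, c, rfl⟩
          exact ⟨E.σ₁₁ a + E.σ₂₁ b, E.σ₁₂ a + E.σ₂₂ b, E.δ₁ a + E.δ₂ b + c,
            by rw [E.R2₁ a, E.R2₂ b]; push_cast; noncomm_ring⟩
      · intro a b c h
        rw [E.R2₁ a, E.R2₂ b] at h
        have h0 : ((E.σ₁₁ a + E.σ₂₁ b : A) : B) * E.y₁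
            + ((E.σ₁₂ a + E.σ₂₂ b : A) : B) * E.y₂
            + ((E.δ₁ a + E.δ₂ b + c : A) : B) = 0 := by
          rw [← h]; push_cast; noncomm_ring
        obtain ⟨ha, hb, hc⟩ := RDE.leftUniq E _ _ _ h0
        have ea1 : E.σ₁₁ a = -E.σ₂₁ b := eq_neg_of_add_eq_zero_left ha
        have ea2 : E.σ₁₂ a = -E.σ₂₂ b := eq_neg_of_add_eq_zero_left hb
        have eb1 : E.σ₂₁ b = -E.σ₁₁ a := eq_neg_of_add_eq_zero_right ha
        have eb2 : E.σ₂₂ b = -E.σ₁₂ a := eq_neg_of_add_eq_zero_right hb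
        have hA : a = 0 := by
          have h1 := (hφσ a).1
          rw [ea1, ea2, map_neg, map_neg, ← neg_add, (hφσ b).2.2.1, neg_zero] at h1
          exact h1.symm
        have hB : b = 0 := by
          have h1 := (hφσ b).2.2.2
          rw [eb1, eb2, map_neg, map_neg, ← neg_add, (hφσ a).2.1, neg_zero] at h1
          exact h1.symm
        have hC : c = 0 := by
          rw [hA, hB] at hc; simpa using hc
        exact ⟨hA, hB, hC⟩
    · rintro ⟨hset, hind⟩
      have uniq : ∀ a b c a' b' c' : A,
          E.y₁ * (a : B) + E.y₂ * (b : B) + (c : B)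
            = E.y₁ * (a' : B) + E.y₂ * (b' : B) + (c' : B) →
          a = a' ∧ b = b' ∧ c = c' := by
        intro a b c a' b' c' h
        have hz : E.y₁ * ((a - a' : A) : B) + E.y₂ * ((b - b' : A) : B) + ((c - c' : A) : B)
            = (E.y₁ * (a : B) + E.y₂ * (b : B) + (c : B))
              - (E.y₁ * (a' : B) + E.y₂ * (b' : B) + (c' : B)) := by
          push_cast; noncomm_ring
        rw [h, sub_self] at hz
        obtain ⟨h1, h2, h3⟩ := hind _ _ _ hz
        exact ⟨sub_eq_zero.mp h1, sub_eq_zero.mp h2, sub_eq_zero.mp h3⟩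
      have hex1 : ∀ r : A, ∃ a b c : A,
          (r : B) * E.y₁ = E.y₁ * (a : B) + E.y₂ * (b : B) + (c : B) := by
        intro r
        have hmem : (r : B) * E.y₁ ∈
            {w : B | ∃ a b c : A, w = (a : B) * E.y₁ + (b : B) * E.y₂ + (c : B)} :=
          ⟨r, 0, 0, by simp⟩
        rw [hset] at hmem
        exact hmem
      have hex2 : ∀ r : A, ∃ a b c : A,
          (r : B) * E.y₂ = E.y₁ * (a : B) + E.y₂ * (b : B) + (c : B) := by
        intro r
        have hmem : (r : B) * E.y₂ ∈
            {w : B | ∃ a b c : A, w = (a : B) * E.y₁ + (b : B) * E.y₂ + (c : B)} :=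
          ⟨0, r, 0, by simp⟩
        rw [hset] at hmem
        exact hmem
      choose f11 f21 g1 hf1 using hex1
      choose f12 f22 g2 hf2 using hex2
      have hadd1 : ∀ r s : A, f11 (r + s) = f11 r + f11 s ∧ f21 (r + s) = f21 r + f21 s
          ∧ g1 (r + s) = g1 r + g1 s := by
        intro r s
        refine uniq _ _ _ _ _ _ ((hf1 (r + s)).symm.trans ?_)
        push_cast
        rw [add_mul, hf1 r, hf1 s]
        push_cast
        noncomm_ring
      have hadd2 : ∀ r s : A, f12 (r + s) = f12 r + f12 s ∧ f22 (r + s) = f22 r + f22 s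
          ∧ g2 (r + s) = g2 r + g2 s := by
        intro r s
        refine uniq _ _ _ _ _ _ ((hf2 (r + s)).symm.trans ?_)
        push_cast
        rw [add_mul, hf2 r, hf2 s]
        push_cast
        noncomm_ring
      have hsm1 : ∀ (t : k) (r : A), f11 (t • r) = t • f11 r ∧ f21 (t • r) = t • f21 r
          ∧ g1 (t • r) = t • g1 r := by
        intro t r
        refine uniq _ _ _ _ _ _ ((hf1 (t • r)).symm.trans ?_)
        simp only [SetLike.val_smul, smul_mul_assoc]
        rw [hf1 r]
        simp only [smul_add, mul_smul_comm]
      have hsm2 : ∀ (t : k) (r : A), f12 (t • r) = t • f12 r ∧ f22 (t • r) = t • f22 r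
          ∧ g2 (t • r) = t • g2 r := by
        intro t r
        refine uniq _ _ _ _ _ _ ((hf2 (t • r)).symm.trans ?_)
        simp only [SetLike.val_smul, smul_mul_assoc]
        rw [hf2 r]
        simp only [smul_add, mul_smul_comm]
      have P1 : f11 1 = 1 ∧ f12 1 = 0 ∧ f21 1 = 0 ∧ f22 1 = 1 := by
        have u1 := uniq _ _ _ _ _ _ ((hf1 1).symm.trans
          (show ((1 : A) : B) * E.y₁
              = E.y₁ * ((1 : A) : B) + E.y₂ * ((0 : A) : B) + ((0 : A) : B) by simp))
        have u2 := uniq _ _ _ _ _ _ ((hf2 1).symm.trans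
          (show ((1 : A) : B) * E.y₂
              = E.y₁ * ((0 : A) : B) + E.y₂ * ((1 : A) : B) + ((0 : A) : B) by simp))
        exact ⟨u1.1, u2.1, u1.2.1, u2.2.1⟩
      have P2 : ∀ r s : A,
          f11 (r * s) = f11 r * f11 s + f12 r * f21 s ∧
          f12 (r * s) = f11 r * f12 s + f12 r * f22 s ∧
          f21 (r * s) = f21 r * f11 s + f22 r * f21 s ∧
          f22 (r * s) = f21 r * f12 s + f22 r * f22 s := by
        intro r s
        have key1 : ((r * s : A) : B) * E.y₁
            = E.y₁ * ((f11 r * f11 s + f12 r * f21 s : A) : B)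
              + E.y₂ * ((f21 r * f11 s + f22 r * f21 s : A) : B)
              + ((g1 r * f11 s + g2 r * f21 s + r * g1 s : A) : B) := by
          calc ((r * s : A) : B) * E.y₁ = (r : B) * ((s : B) * E.y₁) := by
                push_cast; noncomm_ring
            _ = (r : B) * (E.y₁ * ((f11 s : A) : B) + E.y₂ * ((f21 s : A) : B)
                  + ((g1 s : A) : B)) := by rw [hf1 s]
            _ = ((r : B) * E.y₁) * ((f11 s : A) : B) + ((r : B) * E.y₂) * ((f21 s : A) : B)
                  + (r : B) * ((g1 s : A) : B) := by noncomm_ring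
            _ = (E.y₁ * ((f11 r : A) : B) + E.y₂ * ((f21 r : A) : B) + ((g1 r : A) : B))
                    * ((f11 s : A) : B)
                  + (E.y₁ * ((f12 r : A) : B) + E.y₂ * ((f22 r : A) : B) + ((g2 r : A) : B))
                    * ((f21 s : A) : B)
                  + (r : B) * ((g1 s : A) : B) := by rw [hf1 r, hf2 r]
            _ = _ := by push_cast; noncomm_ring
        have key2 : ((r * s : A) : B) * E.y₂
            = E.y₁ * ((f11 r * f12 s + f12 r * f22 s : A) : B)
              + E.y₂ * ((f21 r * f12 s + f22 r * f22 s : A) : B)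
              + ((g1 r * f12 s + g2 r * f22 s + r * g2 s : A) : B) := by
          calc ((r * s : A) : B) * E.y₂ = (r : B) * ((s : B) * E.y₂) := by
                push_cast; noncomm_ring
            _ = (r : B) * (E.y₁ * ((f12 s : A) : B) + E.y₂ * ((f22 s : A) : B)
                  + ((g2 s : A) : B)) := by rw [hf2 s]
            _ = ((r : B) * E.y₁) * ((f12 s : A) : B) + ((r : B) * E.y₂) * ((f22 s : A) : B)
                  + (r : B) * ((g2 s : A) : B) := by noncomm_ring
            _ = (E.y₁ * ((f11 r : A) : B) + E.y₂ * ((f21 r : A) : B) + ((g1 r : A) : B))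
                    * ((f12 s : A) : B)
                  + (E.y₁ * ((f12 r : A) : B) + E.y₂ * ((f22 r : A) : B) + ((g2 r : A) : B))
                    * ((f22 s : A) : B)
                  + (r : B) * ((g2 s : A) : B) := by rw [hf1 r, hf2 r]
            _ = _ := by push_cast; noncomm_ring
        have m1 := uniq _ _ _ _ _ _ ((hf1 (r * s)).symm.trans key1)
        have m2 := uniq _ _ _ _ _ _ ((hf2 (r * s)).symm.trans key2)
        exact ⟨m1.1, m2.1, m1.2.1, m2.2.1⟩
      have P3 : ∀ r : A,
          f11 (E.σ₁₁ r) + f12 (E.σ₁₂ r) = r ∧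
          f21 (E.σ₁₁ r) + f22 (E.σ₁₂ r) = 0 ∧
          f11 (E.σ₂₁ r) + f12 (E.σ₂₂ r) = 0 ∧
          f21 (E.σ₂₁ r) + f22 (E.σ₂₂ r) = r := by
        intro r
        have key3 : E.y₁ * (r : B)
            = E.y₁ * ((f11 (E.σ₁₁ r) + f12 (E.σ₁₂ r) : A) : B)
              + E.y₂ * ((f21 (E.σ₁₁ r) + f22 (E.σ₁₂ r) : A) : B)
              + ((g1 (E.σ₁₁ r) + g2 (E.σ₁₂ r) + E.δ₁ r : A) : B) := by
          rw [E.R2₁ r, hf1 (E.σ₁₁ r), hf2 (E.σ₁₂ r)]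
          push_cast
          noncomm_ring
        have key3' : E.y₂ * (r : B)
            = E.y₁ * ((f11 (E.σ₂₁ r) + f12 (E.σ₂₂ r) : A) : B)
              + E.y₂ * ((f21 (E.σ₂₁ r) + f22 (E.σ₂₂ r) : A) : B)
              + ((g1 (E.σ₂₁ r) + g2 (E.σ₂₂ r) + E.δ₂ r : A) : B) := by
          rw [E.R2₂ r, hf1 (E.σ₂₁ r), hf2 (E.σ₂₂ r)]
          push_cast
          noncomm_ring
        have u := uniq _ _ _ _ _ _ (key3.symm.trans
          (show E.y₁ * (r : B)
              = E.y₁ * ((r : A) : B) + E.y₂ * ((0 : A) : B) + ((0 : A) : B) by simp))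
        have u' := uniq _ _ _ _ _ _ (key3'.symm.trans
          (show E.y₂ * (r : B)
              = E.y₁ * ((0 : A) : B) + E.y₂ * ((r : A) : B) + ((0 : A) : B) by simp))
        exact ⟨u.1, u.2.1, u'.1, u'.2.1⟩
      have P4 : ∀ r : A,
          E.σ₁₁ (f11 r) + E.σ₂₁ (f21 r) = r ∧
          E.σ₁₂ (f11 r) + E.σ₂₂ (f21 r) = 0 ∧
          E.σ₁₁ (f12 r) + E.σ₂₁ (f22 r) = 0 ∧
          E.σ₁₂ (f12 r) + E.σ₂₂ (f22 r) = r := by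
        intro r
        have h := hf1 r
        rw [E.R2₁ (f11 r), E.R2₂ (f21 r)] at h
        have key4 : ((E.σ₁₁ (f11 r) + E.σ₂₁ (f21 r) : A) : B) * E.y₁
            + ((E.σ₁₂ (f11 r) + E.σ₂₂ (f21 r) : A) : B) * E.y₂
            + ((E.δ₁ (f11 r) + E.δ₂ (f21 r) + g1 r : A) : B)
            = (r : B) * E.y₁ + ((0 : A) : B) * E.y₂ + ((0 : A) : B) := by
          rw [h]; push_cast; noncomm_ring
        have h' := hf2 r
        rw [E.R2₁ (f12 r), E.R2₂ (f22 r)] at h'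
        have key4' : ((E.σ₁₁ (f12 r) + E.σ₂₁ (f22 r) : A) : B) * E.y₁
            + ((E.σ₁₂ (f12 r) + E.σ₂₂ (f22 r) : A) : B) * E.y₂
            + ((E.δ₁ (f12 r) + E.δ₂ (f22 r) + g2 r : A) : B)
            = ((0 : A) : B) * E.y₁ + (r : B) * E.y₂ + ((0 : A) : B) := by
          rw [h']; push_cast; noncomm_ring
        have u := RDE.leftUniq' E _ _ _ _ _ _ key4
        have u' := RDE.leftUniq' E _ _ _ _ _ _ key4'
        exact ⟨u.1, u.2.1, u'.1, u'.2.1⟩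
      exact ⟨⟨⟨f11, fun r s => (hadd1 r s).1⟩, fun t r => (hsm1 t r).1⟩,
        ⟨⟨f12, fun r s => (hadd2 r s).1⟩, fun t r => (hsm2 t r).1⟩,
        ⟨⟨f21, fun r s => (hadd1 r s).2.1⟩, fun t r => (hsm1 t r).2.1⟩,
        ⟨⟨f22, fun r s => (hadd2 r s).2.1⟩, fun t r => (hsm2 t r).2.1⟩,
        P1, P2, P3, P4⟩
  refine ⟨hiff, ?_⟩
  rintro ⟨-, hLb, h3, h4⟩
  refine hiff.mpr ⟨?_, fun a b c h => RDE.rightUniq E hLb a b c h⟩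
  ext w
  constructor
  · rintro ⟨a, b, c, rfl⟩
    obtain ⟨a1, b1, c1, h1⟩ := h3 a
    obtain ⟨a2, b2, c2, h2⟩ := h4 b
    exact ⟨a1 + a2, b1 + b2, c1 + c2 + c, by rw [h1, h2]; push_cast; noncomm_ring⟩
  · rintro ⟨a, b, c, rfl⟩
    exact ⟨E.σ₁₁ a + E.σ₂₁ b, E.σ₁₂ a + E.σ₂₂ b, E.δ₁ a + E.δ₂ b + c,
      by rw [E.R2₁ a, E.R2₂ b]; push_cast; noncomm_ring⟩
end

section
/- Assume B is a right double extension of A with data (P, σ, δ, τ) which carries an ℕ-grading B = ⊕_{n≥0} Bₙ making B a graded k-algebra with B₀ = k·1 and dim_k Bₙ < ∞ for all n, such that A is a graded subalgebra of B and y₁, y₂ are homogeneous of positive degree. If p₁₂ ≠ 0 and σ is invertible, then B is a double extension of A: (i) A·y₁ + A·y₂ + A = y₁·A + y₂·A + A; (ii) there exist τ'₁, τ'₂, τ'₀ ∈ A with y₁y₂ = p₁₂⁻¹·y₂y₁ − p₁₂⁻¹p₁₁·y₁² + y₁τ'₁ + y₂τ'₂ + τ'₀; and (iii) the monomials y₂^{n₁}y₁^{n₂}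 (n₁, n₂ ≥ 0) form a basis of B as a right A-module (every b ∈ B is uniquely a finite sum Σ y₂^{n₁}y₁^{n₂}·a_{n₁n₂} with a_{n₁n₂} ∈ A). -/
namespace DoubleExtAux

open Submodule DirectSum

variable {k : Type*} [Field k] {B : Type*} [Ring B] [Algebra k B]
  {A : Subalgebra k B} (E : RightDoubleExtension k A)

/-- Left-basis linear independence, as a statement about finsupps. -/
theorem left_inj (f : ℕ × ℕ →₀ A)
    (h : (f.sum fun n a => (a : B) * (E.y₁ ^ n.1 * E.y₂ ^ n.2)) = 0) : f = 0 := by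
  obtain ⟨g, hg, hu⟩ := E.basis 0
  have h1 : f = g := hu f h.symm
  have h2 : (0 : ℕ × ℕ →₀ A) = g := hu 0 (by simp)
  rw [h1, ← h2]

/-- Left-basis linear independence for finite families with injective keys. -/
theorem left_inj_fin {ι : Type*} [DecidableEq ι] (s : Finset ι) (key : ι → ℕ × ℕ)
    (hkey : ∀ i ∈ s, ∀ j ∈ s, key i = key j → i = j) (c : ι → A)
    (h : ∑ i ∈ s, (c i : B) * (E.y₁ ^ (key i).1 * E.y₂ ^ (key i).2) = 0) :
    ∀ i ∈ s, c i = 0 := by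
  classical
  set F : ℕ × ℕ → A → B := fun q a => (a : B) * (E.y₁ ^ q.1 * E.y₂ ^ q.2) with hF
  have hF0 : ∀ q, F q 0 = 0 := by intro q; simp [hF]
  have hFadd : ∀ q (a b : A), F q (a + b) = F q a + F q b := by
    intro q a b; simp [hF, add_mul]
  have hfs : ∀ t : Finset ι,
      ((∑ i ∈ t, Finsupp.single (key i) (c i)).sum F) = ∑ i ∈ t, F (key i) (c i) := by
    intro t
    induction t using Finset.cons_induction with
    | empty => simp
    | cons p t hp ih =>
      rw [Finset.sum_cons, Finset.sum_cons, Finsupp.sum_add_index' hF0 hFadd,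
        Finsupp.sum_single_index (hF0 _), ih]
  set f : ℕ × ℕ →₀ A := ∑ i ∈ s, Finsupp.single (key i) (c i) with hf
  have hf0 : f = 0 := left_inj E f (by rw [hf, hfs]; exact h)
  intro i hi
  have hfi : f (key i) = c i := by
    rw [hf, Finsupp.finset_sum_apply]
    rw [Finset.sum_eq_single_of_mem i hi]
    · simp
    · intro j hj hji
      exact Finsupp.single_eq_of_ne' (fun hc => hji (hkey j hj i hi hc))
  rw [hf0] at hfi
  simpa using hfi.symm

/-- The span of right-coefficient monomials `y₂^a y₁^b r` with `α ≤ a` and `a + b ≤ n`. -/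
def Jsp (α n : ℕ) : Submodule k B :=
  span k {w | ∃ a b : ℕ, ∃ r : A, α ≤ a ∧ a + b ≤ n ∧ w = E.y₂ ^ a * E.y₁ ^ b * (r : B)}

/-- The span of right-coefficient pure powers `y₁^b r` with `b ≤ m`. -/
def Ksp (m : ℕ) : Submodule k B :=
  span k {w | ∃ b : ℕ, ∃ r : A, b ≤ m ∧ w = E.y₁ ^ b * (r : B)}

theorem Jmem {α n a b : ℕ} (r : A) (h1 : α ≤ a) (h2 : a + b ≤ n) :
    E.y₂ ^ a * E.y₁ ^ b * (r : B) ∈ Jsp E α n :=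
  subset_span ⟨a, b, r, h1, h2, rfl⟩

theorem Kmem {m b : ℕ} (r : A) (h : b ≤ m) : E.y₁ ^ b * (r : B) ∈ Ksp E m :=
  subset_span ⟨b, r, h, rfl⟩

theorem Jmono {α α' n n' : ℕ} (hα : α ≤ α') (hn : n' ≤ n) : Jsp E α' n' ≤ Jsp E α n := by
  rw [Jsp, span_le]
  rintro w ⟨a, b, r, h1, h2, rfl⟩
  exact Jmem E r (hα.trans h1) (h2.trans hn)

theorem Kmono {m m' : ℕ} (h : m ≤ m') : Ksp E m ≤ Ksp E m' := by
  rw [Ksp, span_le]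
  rintro w ⟨b, r, hb, rfl⟩
  exact Kmem E r (hb.trans h)

theorem Ksp_le_J {m n : ℕ} (h : m ≤ n) : Ksp E m ≤ Jsp E 0 n := by
  rw [Ksp, span_le]
  rintro w ⟨b, r, hb, rfl⟩
  have : E.y₂ ^ 0 * E.y₁ ^ b * (r : B) = E.y₁ ^ b * (r : B) := by rw [pow_zero, one_mul]
  exact this ▸ Jmem E r (le_refl 0) (by omega)

theorem Jsp_zero_le {n : ℕ} : Jsp E 0 n ≤ Jsp E 1 n ⊔ Ksp E n := by
  rw [Jsp, span_le]
  rintro w ⟨a, b, r, -, h2, rfl⟩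
  rcases Nat.eq_zero_or_pos a with rfl | ha
  · refine mem_sup_right ?_
    rw [pow_zero, one_mul]
    exact Kmem E r (by omega)
  · exact mem_sup_left (Jmem E r ha h2)

theorem J_mul_A {α n : ℕ} {x : B} (hx : x ∈ Jsp E α n) (s : A) : x * (s : B) ∈ Jsp E α n := by
  induction hx using span_induction with
  | mem w hw =>
    obtain ⟨a, b, r, h1, h2, rfl⟩ := hw
    have : E.y₂ ^ a * E.y₁ ^ b * (r : B) * (s : B)
        = E.y₂ ^ a * E.y₁ ^ b * ((r * s : A) : B) := by push_cast; rw [mul_assoc]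
    rw [this]; exact Jmem E _ h1 h2
  | zero => simpa using (Jsp E α n).zero_mem
  | add x y _ _ hx hy => rw [add_mul]; exact add_mem hx hy
  | smul c x _ hx => rw [smul_mul_assoc]; exact smul_mem _ _ hx

theorem K_mul_A {m : ℕ} {x : B} (hx : x ∈ Ksp E m) (s : A) : x * (s : B) ∈ Ksp E m := by
  induction hx using span_induction with
  | mem w hw =>
    obtain ⟨b, r, hb, rfl⟩ := hw
    have : E.y₁ ^ b * (r : B) * (s : B) = E.y₁ ^ b * ((r * s : A) : B) := by
      push_cast; rw [mul_assoc]
    rw [this]; exact Kmem E _ hb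
  | zero => simpa using (Ksp E m).zero_mem
  | add x y _ _ hx hy => rw [add_mul]; exact add_mem hx hy
  | smul c x _ hx => rw [smul_mul_assoc]; exact smul_mem _ _ hx

theorem J_shiftL {α n : ℕ} {x : B} (hx : x ∈ Jsp E α n) (c : ℕ) :
    E.y₂ ^ c * x ∈ Jsp E (α + c) (n + c) := by
  induction hx using span_induction with
  | mem w hw =>
    obtain ⟨a, b, r, h1, h2, rfl⟩ := hw
    have : E.y₂ ^ c * (E.y₂ ^ a * E.y₁ ^ b * (r : B))
        = E.y₂ ^ (c + a) * E.y₁ ^ b * (r : B) := by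
      rw [pow_add]
      simp [mul_assoc]
    rw [this]; exact Jmem E r (by omega) (by omega)
  | zero => simpa using (Jsp E (α + c) (n + c)).zero_mem
  | add x y _ _ hx hy => rw [mul_add]; exact add_mem hx hy
  | smul d x _ hx => rw [mul_smul_comm]; exact smul_mem _ _ hx

section Comm

variable {F G C : A → A} {z : B}

/-- Multiplying `Jsp` on the right by `z` (either `y₁` or `y₂`), given the normal-ordering
lemma for smaller powers. -/
theorem J_mul_z (hc : ∀ r : A, (r : B) * z = E.y₁ * (F r : B) + E.y₂ * (G r : B) + (C r : B))
    {α n : ℕ} (hw : ∀ b' ≤ n - α, E.y₁ ^ b' * E.y₂ ∈ Jsp E 0 (b' + 1))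
    {x : B} (hx : x ∈ Jsp E α n) : x * z ∈ Jsp E α (n + 1) := by
  induction hx using span_induction with
  | mem w hwm =>
    obtain ⟨a, b, r, h1, h2, rfl⟩ := hwm
    have key : E.y₂ ^ a * E.y₁ ^ b * (r : B) * z
        = E.y₂ ^ a * E.y₁ ^ (b + 1) * (F r : B)
          + E.y₂ ^ a * ((E.y₁ ^ b * E.y₂) * (G r : B))
          + E.y₂ ^ a * E.y₁ ^ b * (C r : B) := by
      rw [mul_assoc (E.y₂ ^ a * E.y₁ ^ b) (r : B) z, hc]
      simp [mul_add, pow_succ, mul_assoc]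
    rw [key]
    refine add_mem (add_mem ?_ ?_) ?_
    · exact Jmem E _ h1 (by omega)
    · have h3 : E.y₁ ^ b * E.y₂ ∈ Jsp E 0 (b + 1) := hw b (by omega)
      have h4 := J_mul_A E h3 (G r)
      have h5 := J_shiftL E h4 a
      exact Jmono E (by omega) (by omega) h5
    · exact Jmem E _ h1 (by omega)
  | zero => simpa using (Jsp E α (n + 1)).zero_mem
  | add x y _ _ hx hy => rw [add_mul]; exact add_mem hx hy
  | smul c x _ hx => rw [smul_mul_assoc]; exact smul_mem _ _ hx

theorem K_mul_z (hc : ∀ r : A, (r : B) * z = E.y₁ * (F r : B) + E.y₂ * (G r : B) + (C r : B))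
    {m : ℕ} (hw : ∀ b' ≤ m, E.y₁ ^ b' * E.y₂ ∈ Jsp E 0 (b' + 1))
    {x : B} (hx : x ∈ Ksp E m) : x * z ∈ Jsp E 1 (m + 2) ⊔ Ksp E (m + 1) := by
  induction hx using span_induction with
  | mem w hwm =>
    obtain ⟨b, r, hb, rfl⟩ := hwm
    have key : E.y₁ ^ b * (r : B) * z
        = E.y₁ ^ (b + 1) * (F r : B)
          + (E.y₁ ^ b * E.y₂) * (G r : B)
          + E.y₁ ^ b * (C r : B) := by
      rw [mul_assoc (E.y₁ ^ b) (r : B) z, hc]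
      simp [mul_add, pow_succ, mul_assoc]
    rw [key]
    refine add_mem (add_mem ?_ ?_) ?_
    · exact mem_sup_right (Kmem E _ (by omega))
    · have h3 : (E.y₁ ^ b * E.y₂) * (G r : B) ∈ Jsp E 0 (b + 1) :=
        J_mul_A E (hw b hb) (G r)
      have h4 := Jsp_zero_le E h3
      refine sup_le_sup (Jmono E le_rfl (by omega)) (Kmono E (by omega)) h4
    · exact mem_sup_right (Kmono E (by omega) (Kmem E _ hb))
  | zero => simpa using zero_mem _
  | add x y _ _ hx hy => rw [add_mul]; exact add_mem hx hy
  | smul c x _ hx => rw [smul_mul_assoc]; exact smul_mem _ _ hx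

end Comm

section Ordering

variable {F₁ G₁ C₁ F₂ G₂ C₂ : A → A} {q q' : k} {t₁ t₂ t₀ : A}

/-- The target space of the normal-ordering lemma for `y₁^b y₂`. -/
def Tsp (m : ℕ) : Submodule k B :=
  Jsp E 1 (m + 1) ⊔ (Ksp E m ⊔ span k {E.y₁ ^ (m + 1)})

theorem Tsp_le_J (m : ℕ) : Tsp E m ≤ Jsp E 0 (m + 1) := by
  refine sup_le (Jmono E (by omega) le_rfl) (sup_le (Ksp_le_J E (by omega)) ?_)
  rw [span_le, Set.singleton_subset_iff]
  have : E.y₂ ^ 0 * E.y₁ ^ (m + 1) * ((1 : A) : B) = E.y₁ ^ (m + 1) := by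
    rw [pow_zero, one_mul, OneMemClass.coe_one, mul_one]
  exact this ▸ Jmem E 1 le_rfl (by omega)

theorem ylemma
    (hc₁ : ∀ r : A, (r : B) * E.y₁ = E.y₁ * (F₁ r : B) + E.y₂ * (G₁ r : B) + (C₁ r : B))
    (hL1 : E.y₁ * E.y₂ = q • (E.y₂ * E.y₁) + q' • (E.y₁ * E.y₁)
      + E.y₁ * (t₁ : B) + E.y₂ * (t₂ : B) + (t₀ : B)) :
    ∀ b : ℕ, E.y₁ ^ b * E.y₂ ∈ Tsp E b := by
  intro b
  induction b using Nat.strong_induction_on with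
  | _ b ih =>
    match b with
    | 0 =>
      refine mem_sup_left ?_
      have : E.y₂ ^ 1 * E.y₁ ^ 0 * ((1 : A) : B) = E.y₁ ^ 0 * E.y₂ := by
        simp
      exact this ▸ Jmem E 1 le_rfl le_rfl
    | Nat.succ b =>
      have hwk : ∀ b' ≤ b, E.y₁ ^ b' * E.y₂ ∈ Jsp E 0 (b' + 1) := fun b' hb' =>
        Tsp_le_J E b' (ih b' (by omega))
      obtain ⟨u, hu, zz, hz, huz⟩ := mem_sup.mp (ih b (by omega))
      obtain ⟨v, hv, ww, hww, hvw⟩ := mem_sup.mp hz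
      obtain ⟨c, rfl⟩ := mem_span_singleton.mp hww
      have huvc : E.y₁ ^ b * E.y₂ = u + v + c • E.y₁ ^ (b + 1) := by
        rw [← huz, ← hvw, add_assoc]
      have expand : E.y₁ ^ (b + 1) * E.y₂
          = q • ((u + v + c • E.y₁ ^ (b + 1)) * E.y₁) + q' • (E.y₁ ^ b * (E.y₁ * E.y₁))
            + E.y₁ ^ b * (E.y₁ * (t₁ : B)) + (u + v + c • E.y₁ ^ (b + 1)) * (t₂ : B)
            + E.y₁ ^ b * (t₀ : B) := by
        calc E.y₁ ^ (b + 1) * E.y₂ = E.y₁ ^ b * (E.y₁ * E.y₂) := by rw [pow_succ, mul_assoc]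
          _ = E.y₁ ^ b * (q • (E.y₂ * E.y₁) + q' • (E.y₁ * E.y₁)
              + E.y₁ * (t₁ : B) + E.y₂ * (t₂ : B) + (t₀ : B)) := by rw [hL1]
          _ = q • ((E.y₁ ^ b * E.y₂) * E.y₁) + q' • (E.y₁ ^ b * (E.y₁ * E.y₁))
              + E.y₁ ^ b * (E.y₁ * (t₁ : B)) + (E.y₁ ^ b * E.y₂) * (t₂ : B)
              + E.y₁ ^ b * (t₀ : B) := by
            simp only [mul_add, mul_smul_comm, mul_assoc]
          _ = _ := by rw [huvc]
      rw [expand]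
      have hy1pow : E.y₁ ^ (b + 1) * E.y₁ = E.y₁ ^ (b + 2) := by
        rw [← pow_succ]
      have hJ_le_T : Jsp E 1 (b + 2) ≤ Tsp E (b + 1) := le_sup_left
      have hK_le_T : Ksp E (b + 1) ≤ Tsp E (b + 1) := le_sup_of_le_right le_sup_left
      have hS_le_T : span k {E.y₁ ^ (b + 2)} ≤ Tsp E (b + 1) := le_sup_of_le_right le_sup_right
      have hy₁big : E.y₁ ^ (b + 2) ∈ Tsp E (b + 1) :=
        hS_le_T (mem_span_singleton_self _)
      refine add_mem (add_mem (add_mem (add_mem ?_ ?_) ?_) ?_) ?_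
      · -- q • ((u + v + c • y₁^(b+1)) * y₁)
        refine smul_mem _ _ ?_
        rw [add_mul, add_mul, smul_mul_assoc, hy1pow]
        refine add_mem (add_mem ?_ ?_) (smul_mem _ _ hy₁big)
        · refine hJ_le_T (J_mul_z E hc₁ ?_ hu)
          intro b' hb'
          exact hwk b' (by omega)
        · have h5 := K_mul_z E hc₁ hwk hv
          exact sup_le hJ_le_T hK_le_T h5
      · -- q' • (y₁^b * (y₁ * y₁))
        refine smul_mem _ _ ?_
        have : E.y₁ ^ b * (E.y₁ * E.y₁) = E.y₁ ^ (b + 2) := by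
          rw [pow_succ, pow_succ, mul_assoc]
        rw [this]; exact hy₁big
      · -- y₁^b * (y₁ * t₁) = y₁^(b+1) * t₁
        have : E.y₁ ^ b * (E.y₁ * (t₁ : B)) = E.y₁ ^ (b + 1) * (t₁ : B) := by
          rw [pow_succ, mul_assoc]
        rw [this]; exact hK_le_T (Kmem E _ le_rfl)
      · -- (u + v + c • y₁^(b+1)) * t₂
        rw [add_mul, add_mul, smul_mul_assoc]
        refine add_mem (add_mem ?_ ?_) ?_
        · exact hJ_le_T (Jmono E le_rfl (by omega) (J_mul_A E hu t₂))
        · exact hK_le_T (Kmono E (by omega) (K_mul_A E hv t₂))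
        · exact smul_mem _ _ (hK_le_T (Kmem E _ le_rfl))
      · exact hK_le_T (Kmono E (by omega) (Kmem E _ (le_refl b)))

theorem yweak
    (hc₁ : ∀ r : A, (r : B) * E.y₁ = E.y₁ * (F₁ r : B) + E.y₂ * (G₁ r : B) + (C₁ r : B))
    (hL1 : E.y₁ * E.y₂ = q • (E.y₂ * E.y₁) + q' • (E.y₁ * E.y₁)
      + E.y₁ * (t₁ : B) + E.y₂ * (t₂ : B) + (t₀ : B))
    (b : ℕ) : E.y₁ ^ b * E.y₂ ∈ Jsp E 0 (b + 1) :=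
  Tsp_le_J E b (ylemma E hc₁ hL1 b)

theorem mono_mem
    (hc₁ : ∀ r : A, (r : B) * E.y₁ = E.y₁ * (F₁ r : B) + E.y₂ * (G₁ r : B) + (C₁ r : B))
    (hc₂ : ∀ r : A, (r : B) * E.y₂ = E.y₁ * (F₂ r : B) + E.y₂ * (G₂ r : B) + (C₂ r : B))
    (hL1 : E.y₁ * E.y₂ = q • (E.y₂ * E.y₁) + q' • (E.y₁ * E.y₁)
      + E.y₁ * (t₁ : B) + E.y₂ * (t₂ : B) + (t₀ : B))
    (i j : ℕ) (r : A) : (r : B) * (E.y₁ ^ i * E.y₂ ^ j) ∈ Jsp E 0 (i + j) := by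
  have hbase : ∀ i : ℕ, (r : B) * E.y₁ ^ i ∈ Jsp E 0 i := by
    intro i
    induction i with
    | zero =>
      have : E.y₂ ^ 0 * E.y₁ ^ 0 * (r : B) = (r : B) * E.y₁ ^ 0 := by simp
      exact this ▸ Jmem E r le_rfl le_rfl
    | succ i ihi =>
      have : (r : B) * E.y₁ ^ (i + 1) = ((r : B) * E.y₁ ^ i) * E.y₁ := by
        rw [pow_succ, mul_assoc]
      rw [this]
      exact J_mul_z E hc₁ (fun b' _ => yweak E hc₁ hL1 b') ihi
  induction j with
  | zero => simpa using hbase i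
  | succ j ihj =>
    have : (r : B) * (E.y₁ ^ i * E.y₂ ^ (j + 1))
        = ((r : B) * (E.y₁ ^ i * E.y₂ ^ j)) * E.y₂ := by
      rw [pow_succ]; simp [mul_assoc]
    rw [this]
    have h2 := J_mul_z E hc₂ (fun b' _ => yweak E hc₁ hL1 b') ihj
    exact Jmono E le_rfl (by omega) h2

/-- Every element of `B` has a right-coefficient representation. -/
theorem right_exists
    (hc₁ : ∀ r : A, (r : B) * E.y₁ = E.y₁ * (F₁ r : B) + E.y₂ * (G₁ r : B) + (C₁ r : B))
    (hc₂ : ∀ r : A, (r : B) * E.y₂ = E.y₁ * (F₂ r : B) + E.y₂ * (G₂ r : B) + (C₂ r : B))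
    (hL1 : E.y₁ * E.y₂ = q • (E.y₂ * E.y₁) + q' • (E.y₁ * E.y₁)
      + E.y₁ * (t₁ : B) + E.y₂ * (t₂ : B) + (t₀ : B))
    (x : B) :
    ∃ f : ℕ × ℕ →₀ A, x = f.sum fun p a => (E.y₂ ^ p.1 * E.y₁ ^ p.2) * (a : B) := by
  classical
  set W : Submodule k B :=
    { carrier := {x | ∃ f : ℕ × ℕ →₀ A,
        x = f.sum fun p a => (E.y₂ ^ p.1 * E.y₁ ^ p.2) * (a : B)}
      add_mem' := by
        rintro x y ⟨f, rfl⟩ ⟨g, rfl⟩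
        refine ⟨f + g, ?_⟩
        rw [Finsupp.sum_add_index' (fun p => by simp) (fun p a b => by push_cast; rw [mul_add])]
      zero_mem' := ⟨0, by simp⟩
      smul_mem' := by
        rintro c x ⟨f, rfl⟩
        refine ⟨c • f, ?_⟩
        rw [Finsupp.sum_smul_index' (fun p => by simp), Finsupp.smul_sum]
        congr 1
        funext p a
        push_cast
        rw [mul_smul_comm] } with hW
  have hJW : ∀ n, Jsp E 0 n ≤ W := by
    intro n
    rw [Jsp, span_le]
    rintro w ⟨a, b, r, -, -, rfl⟩
    exact ⟨Finsupp.single (a, b) r, by rw [Finsupp.sum_single_index (by simp)]⟩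
  suffices hx : x ∈ W by exact hx
  obtain ⟨f, hfx, -⟩ := E.basis x
  rw [hfx, Finsupp.sum]
  refine sum_mem fun p hp => ?_
  exact hJW _ (mono_mem E hc₁ hc₂ hL1 p.1 p.2 (f p))

end Ordering

end DoubleExtAux

section Graded

open Submodule DirectSum DoubleExtAux

variable {k : Type*} [Field k] {B : Type*} [Ring B] [Algebra k B]
  {A : Subalgebra k B} (E : RightDoubleExtension k A)
  (𝒜 : ℕ → Submodule k B) [GradedAlgebra 𝒜]
  {d₁ d₂ : ℕ}

/-- The degree of the monomial `y₂^{p.1} y₁^{p.2}`. -/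
def wdeg (d₁ d₂ : ℕ) (p : ℕ × ℕ) : ℕ := p.1 * d₂ + p.2 * d₁

theorem mon_right_mem (hy1 : E.y₁ ∈ 𝒜 d₁) (hy2 : E.y₂ ∈ 𝒜 d₂) (p : ℕ × ℕ) :
    E.y₂ ^ p.1 * E.y₁ ^ p.2 ∈ 𝒜 (wdeg d₁ d₂ p) := by
  have h1 : E.y₂ ^ p.1 ∈ 𝒜 (p.1 * d₂) := by
    simpa [smul_eq_mul] using SetLike.pow_mem_graded p.1 hy2
  have h2 : E.y₁ ^ p.2 ∈ 𝒜 (p.2 * d₁) := by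
    simpa [smul_eq_mul] using SetLike.pow_mem_graded p.2 hy1
  exact SetLike.mul_mem_graded h1 h2

theorem mon_left_mem (hy1 : E.y₁ ∈ 𝒜 d₁) (hy2 : E.y₂ ∈ 𝒜 d₂) (p : ℕ × ℕ) :
    E.y₁ ^ p.2 * E.y₂ ^ p.1 ∈ 𝒜 (wdeg d₁ d₂ p) := by
  have h1 : E.y₂ ^ p.1 ∈ 𝒜 (p.1 * d₂) := by
    simpa [smul_eq_mul] using SetLike.pow_mem_graded p.1 hy2
  have h2 : E.y₁ ^ p.2 ∈ 𝒜 (p.2 * d₁) := by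
    simpa [smul_eq_mul] using SetLike.pow_mem_graded p.2 hy1
  have := SetLike.mul_mem_graded h2 h1
  rwa [show p.2 * d₁ + p.1 * d₂ = wdeg d₁ d₂ p from by rw [wdeg]; omega] at this

/-- The finite index set of monomials of degree at most `n`. -/
def Sfin (d₁ d₂ n : ℕ) : Finset (ℕ × ℕ) :=
  (Finset.range (n + 1) ×ˢ Finset.range (n + 1)).filter (fun p => wdeg d₁ d₂ p ≤ n)

theorem mem_Sfin_of (hd₁ : 0 < d₁) (hd₂ : 0 < d₂) {p : ℕ × ℕ} {n : ℕ}
    (h : wdeg d₁ d₂ p ≤ n) : p ∈ Sfin d₁ d₂ n := by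
  have h1 : p.1 ≤ p.1 * d₂ := Nat.le_mul_of_pos_right _ hd₂
  have h2 : p.2 ≤ p.2 * d₁ := Nat.le_mul_of_pos_right _ hd₁
  rw [Sfin, Finset.mem_filter, Finset.mem_product, Finset.mem_range, Finset.mem_range]
  refine ⟨⟨?_, ?_⟩, h⟩ <;> rw [wdeg] at h <;> omega

theorem wdeg_le_of_mem_Sfin {p : ℕ × ℕ} {n : ℕ} (h : p ∈ Sfin d₁ d₂ n) :
    wdeg d₁ d₂ p ≤ n := (Finset.mem_filter.mp h).2

/-- Projecting a right-coefficient representation to the degree-`n` part. -/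
theorem proj_sum [DecidableEq (ℕ × ℕ)] (hd₁ : 0 < d₁) (hd₂ : 0 < d₂)
    (hy1 : E.y₁ ∈ 𝒜 d₁) (hy2 : E.y₂ ∈ 𝒜 d₂) (f : ℕ × ℕ →₀ A) (n : ℕ) :
    ((DirectSum.decompose 𝒜 (f.sum fun p a => (E.y₂ ^ p.1 * E.y₁ ^ p.2) * (a : B)) n : 𝒜 n) : B)
      = ∑ p ∈ Sfin d₁ d₂ n, (E.y₂ ^ p.1 * E.y₁ ^ p.2)
          * ((DirectSum.decompose 𝒜 ((f p : A) : B) (n - wdeg d₁ d₂ p) : 𝒜 _) : B) := by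
  classical
  have hproj : ∀ (s : Finset (ℕ × ℕ)) (h : ℕ × ℕ → B),
      ((DirectSum.decompose 𝒜 (∑ i ∈ s, h i) n : 𝒜 n) : B)
        = ∑ i ∈ s, ((DirectSum.decompose 𝒜 (h i) n : 𝒜 n) : B) := by
    intro s h
    induction s using Finset.cons_induction with
    | empty => simp
    | cons p t hp ih =>
      rw [Finset.sum_cons, Finset.sum_cons, DirectSum.decompose_add, DirectSum.add_apply,
        Submodule.coe_add, ih]
  rw [Finsupp.sum, hproj]
  have hterm : ∀ p : ℕ × ℕ,
      ((DirectSum.decompose 𝒜 ((E.y₂ ^ p.1 * E.y₁ ^ p.2) * ((f p : A) : B)) n : 𝒜 n) : B)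
        = if wdeg d₁ d₂ p ≤ n then
            (E.y₂ ^ p.1 * E.y₁ ^ p.2)
              * ((DirectSum.decompose 𝒜 ((f p : A) : B) (n - wdeg d₁ d₂ p) : 𝒜 _) : B)
          else 0 := by
    intro p
    split_ifs with hle
    · exact DirectSum.coe_decompose_mul_of_left_mem_of_le 𝒜 (mon_right_mem E 𝒜 hy1 hy2 p) hle
    · exact DirectSum.coe_decompose_mul_of_left_mem_of_not_le 𝒜 (mon_right_mem E 𝒜 hy1 hy2 p) hle
  calc ∑ p ∈ f.support,
        ((DirectSum.decompose 𝒜 ((E.y₂ ^ p.1 * E.y₁ ^ p.2) * ((f p : A) : B)) n : 𝒜 n) : B)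
      = ∑ p ∈ f.support.filter (fun p => wdeg d₁ d₂ p ≤ n),
          (E.y₂ ^ p.1 * E.y₁ ^ p.2)
            * ((DirectSum.decompose 𝒜 ((f p : A) : B) (n - wdeg d₁ d₂ p) : 𝒜 _) : B) := by
        rw [Finset.sum_filter]
        exact Finset.sum_congr rfl fun p _ => hterm p
    _ = ∑ p ∈ Sfin d₁ d₂ n, (E.y₂ ^ p.1 * E.y₁ ^ p.2)
          * ((DirectSum.decompose 𝒜 ((f p : A) : B) (n - wdeg d₁ d₂ p) : 𝒜 _) : B) := by
        refine Finset.sum_subset ?_ ?_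
        · intro p hp
          exact mem_Sfin_of hd₁ hd₂ (Finset.mem_filter.mp hp).2
        · intro p hp hnp
          have : f p = 0 := by
            by_contra hne
            exact hnp (Finset.mem_filter.mpr
              ⟨Finsupp.mem_support_iff.mpr hne, wdeg_le_of_mem_Sfin hp⟩)
          rw [this]
          simp

/-- Uniqueness of the right-coefficient representation. -/
theorem right_unique (hconn : 𝒜 0 = 1)
    (hfin : ∀ n, FiniteDimensional k (𝒜 n))
    (hAgr : ∀ a : B, a ∈ A → ∀ n, ((DirectSum.decompose 𝒜 a n : 𝒜 n) : B) ∈ A)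
    (hd₁ : 0 < d₁) (hd₂ : 0 < d₂) (hy1 : E.y₁ ∈ 𝒜 d₁) (hy2 : E.y₂ ∈ 𝒜 d₂)
    (hex : ∀ x : B, ∃ f : ℕ × ℕ →₀ A,
      x = f.sum fun p a => (E.y₂ ^ p.1 * E.y₁ ^ p.2) * (a : B))
    (f g : ℕ × ℕ →₀ A)
    (hfg : (f.sum fun p a => (E.y₂ ^ p.1 * E.y₁ ^ p.2) * (a : B))
      = g.sum fun p a => (E.y₂ ^ p.1 * E.y₁ ^ p.2) * (a : B)) :
    f = g := by
  classical
  -- Per-degree analysis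
  have main : ∀ n : ℕ, ∀ p ∈ Sfin d₁ d₂ n,
      (DirectSum.decompose 𝒜 ((f p : A) : B) (n - wdeg d₁ d₂ p))
        = (DirectSum.decompose 𝒜 ((g p : A) : B) (n - wdeg d₁ d₂ p)) := by
    intro n
    set AA : ℕ × ℕ → Submodule k B := fun p => A.toSubmodule ⊓ 𝒜 (n - wdeg d₁ d₂ p) with hAA
    haveI : ∀ p : ℕ × ℕ, FiniteDimensional k (AA p) := by
      intro p
      haveI := hfin (n - wdeg d₁ d₂ p)
      exact Submodule.finiteDimensional_of_le inf_le_right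
    haveI : FiniteDimensional k ((p : Sfin d₁ d₂ n) → AA (p : ℕ × ℕ)) := by infer_instance
    set Rmap : ((p : Sfin d₁ d₂ n) → AA (p : ℕ × ℕ)) →ₗ[k] B := ∑ p : Sfin d₁ d₂ n,
      (LinearMap.mulLeft k (E.y₂ ^ (p : ℕ × ℕ).1 * E.y₁ ^ (p : ℕ × ℕ).2)).comp
        ((AA (p : ℕ × ℕ)).subtype.comp (LinearMap.proj p)) with hRmap
    set Lmap : ((p : Sfin d₁ d₂ n) → AA (p : ℕ × ℕ)) →ₗ[k] B := ∑ p : Sfin d₁ d₂ n,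
      (LinearMap.mulRight k (E.y₁ ^ (p : ℕ × ℕ).2 * E.y₂ ^ (p : ℕ × ℕ).1)).comp
        ((AA (p : ℕ × ℕ)).subtype.comp (LinearMap.proj p)) with hLmap
    have hRapp : ∀ v, Rmap v = ∑ p ∈ (Sfin d₁ d₂ n).attach,
        (E.y₂ ^ (p : ℕ × ℕ).1 * E.y₁ ^ (p : ℕ × ℕ).2) * ((v p : B)) := by
      intro v
      rw [hRmap]
      simp [LinearMap.sum_apply, LinearMap.mulLeft_apply, Finset.univ_eq_attach, mul_assoc]
    have hLapp : ∀ v, Lmap v = ∑ p ∈ (Sfin d₁ d₂ n).attach,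
        ((v p : B)) * (E.y₁ ^ (p : ℕ × ℕ).2 * E.y₂ ^ (p : ℕ × ℕ).1) := by
      intro v
      rw [hLmap]
      simp [LinearMap.sum_apply, LinearMap.mulRight_apply, Finset.univ_eq_attach, mul_assoc]
    have hwle : ∀ p : Sfin d₁ d₂ n, wdeg d₁ d₂ (p : ℕ × ℕ) ≤ n := fun p =>
      wdeg_le_of_mem_Sfin p.2
    -- L is injective
    have hLinj : Function.Injective Lmap := by
      rw [← LinearMap.ker_eq_bot, eq_bot_iff]
      rintro v hv
      have hv0 : Lmap v = 0 := hv
      rw [hLapp] at hv0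
      have hkey := left_inj_fin E (Sfin d₁ d₂ n).attach
        (fun p : Sfin d₁ d₂ n => ((p : ℕ × ℕ).2, (p : ℕ × ℕ).1))
        (by
          intro i _ j _ hij
          apply Subtype.ext
          exact Prod.ext (congrArg Prod.snd hij) (congrArg Prod.fst hij))
        (fun p => (⟨(v p : B), (v p).2.1⟩ : A)) (by exact hv0)
      have hv0' : v = 0 := by
        funext p
        have h1 := hkey p (Finset.mem_attach _ p)
        have h2 : ((v p : B)) = 0 := congrArg Subtype.val h1
        exact Subtype.ext h2
      rw [hv0']
      exact zero_mem ⊥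
    have hLrange : LinearMap.range Lmap ≤ 𝒜 n := by
      rintro x ⟨v, rfl⟩
      rw [hLapp]
      refine sum_mem fun p _ => ?_
      have h1 : ((v p : B)) ∈ 𝒜 (n - wdeg d₁ d₂ (p : ℕ × ℕ)) := (v p).2.2
      have h2 := SetLike.mul_mem_graded h1 (mon_left_mem E 𝒜 hy1 hy2 (p : ℕ × ℕ))
      rwa [Nat.sub_add_cancel (hwle p)] at h2
    -- computing R on the projected coefficients of a finsupp
    have hRval : ∀ h : ℕ × ℕ →₀ A,
        Rmap (fun p => ⟨((DirectSum.decompose 𝒜 ((h (p : ℕ × ℕ) : A) : B)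
            (n - wdeg d₁ d₂ (p : ℕ × ℕ)) : 𝒜 _) : B),
          Submodule.mem_inf.mpr ⟨hAgr _ (h (p : ℕ × ℕ)).2 _, SetLike.coe_mem _⟩⟩)
          = ((DirectSum.decompose 𝒜
              (h.sum fun p a => (E.y₂ ^ p.1 * E.y₁ ^ p.2) * (a : B)) n : 𝒜 n) : B) := by
      intro h
      rw [hRapp, proj_sum E 𝒜 hd₁ hd₂ hy1 hy2 h n]
      exact Finset.sum_attach _ (fun q => (E.y₂ ^ q.1 * E.y₁ ^ q.2)
        * ((DirectSum.decompose 𝒜 ((h q : A) : B) (n - wdeg d₁ d₂ q) : 𝒜 _) : B))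
    -- R is surjective onto 𝒜 n
    have hRrange : LinearMap.range Rmap = 𝒜 n := by
      apply le_antisymm
      · rintro x ⟨v, rfl⟩
        rw [hRapp]
        refine sum_mem fun p _ => ?_
        have h1 : ((v p : B)) ∈ 𝒜 (n - wdeg d₁ d₂ (p : ℕ × ℕ)) := (v p).2.2
        have h2 := SetLike.mul_mem_graded (mon_right_mem E 𝒜 hy1 hy2 (p : ℕ × ℕ)) h1
        rwa [Nat.add_sub_cancel' (hwle p)] at h2
      · intro x hx
        obtain ⟨fx, hfx⟩ := hex x
        refine ⟨fun p => ⟨((DirectSum.decompose 𝒜 ((fx (p : ℕ × ℕ) : A) : B)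
            (n - wdeg d₁ d₂ (p : ℕ × ℕ)) : 𝒜 _) : B),
          Submodule.mem_inf.mpr ⟨hAgr _ (fx (p : ℕ × ℕ)).2 _, SetLike.coe_mem _⟩⟩, ?_⟩
        rw [hRval fx, ← hfx, DirectSum.decompose_of_mem_same 𝒜 hx]
    -- dimension count: R is injective
    haveI := hfin n
    have hfr1 : Module.finrank k ((p : Sfin d₁ d₂ n) → AA (p : ℕ × ℕ))
        = Module.finrank k (LinearMap.range Lmap) :=
      (LinearMap.finrank_range_of_inj hLinj).symm
    have hfr2 : Module.finrank k (LinearMap.range Lmap) ≤ Module.finrank k (𝒜 n) :=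
      Submodule.finrank_mono hLrange
    have hfr3 : Module.finrank k (LinearMap.range Rmap)
        + Module.finrank k (LinearMap.ker Rmap)
        = Module.finrank k ((p : Sfin d₁ d₂ n) → AA (p : ℕ × ℕ)) :=
      LinearMap.finrank_range_add_finrank_ker Rmap
    have hfr4 : Module.finrank k (LinearMap.range Rmap) = Module.finrank k (𝒜 n) := by
      rw [hRrange]
    have hker0 : Module.finrank k (LinearMap.ker Rmap) = 0 := by omega
    have hker : LinearMap.ker Rmap = ⊥ := Submodule.finrank_eq_zero.mp hker0
    have hRinj : Function.Injective Rmap := LinearMap.ker_eq_bot.mp hker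
    -- conclude
    intro p hp
    have heq : (fun p : Sfin d₁ d₂ n => (⟨((DirectSum.decompose 𝒜 ((f (p : ℕ × ℕ) : A) : B)
            (n - wdeg d₁ d₂ (p : ℕ × ℕ)) : 𝒜 _) : B),
          Submodule.mem_inf.mpr ⟨hAgr _ (f (p : ℕ × ℕ)).2 _, SetLike.coe_mem _⟩⟩ :
            AA (p : ℕ × ℕ)))
        = (fun p : Sfin d₁ d₂ n => ⟨((DirectSum.decompose 𝒜 ((g (p : ℕ × ℕ) : A) : B)
            (n - wdeg d₁ d₂ (p : ℕ × ℕ)) : 𝒜 _) : B),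
          Submodule.mem_inf.mpr ⟨hAgr _ (g (p : ℕ × ℕ)).2 _, SetLike.coe_mem _⟩⟩) := by
      apply hRinj
      rw [hRval f, hRval g, hfg]
    have h5 := congrFun heq ⟨p, hp⟩
    exact Subtype.ext (congrArg (fun z : AA p => (z : B)) h5)
  ext p
  have hall : ∀ m : ℕ, ((DirectSum.decompose 𝒜 ((f p : A) : B) m : 𝒜 m) : B)
      = ((DirectSum.decompose 𝒜 ((g p : A) : B) m : 𝒜 m) : B) := by
    intro m
    have hp : p ∈ Sfin d₁ d₂ (m + wdeg d₁ d₂ p) := mem_Sfin_of hd₁ hd₂ (by omega)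
    have h6 := congrArg Subtype.val (main (m + wdeg d₁ d₂ p) p hp)
    rwa [Nat.add_sub_cancel] at h6
  have h7 : ((f p : A) : B) = ((g p : A) : B) := by
    have hdec : DirectSum.decompose 𝒜 ((f p : A) : B) = DirectSum.decompose 𝒜 ((g p : A) : B) := by
      apply DFinsupp.ext
      intro m
      exact Subtype.ext (hall m)
    have h8 := congrArg (DirectSum.decompose 𝒜).symm hdec
    simpa using h8
  exact h7

end Graded

/-- A connected graded right double extension with `p₁₂ ≠ 0` and `σ` invertible is a
double extension: `Ay₁+Ay₂+A = y₁A+y₂A+A`, the left relation (L1) holds, and the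
monomials `y₂^{n₁}y₁^{n₂}` form a basis of `B` as a right `A`-module. -/
theorem double_of_graded_invertible
    {k : Type*} [Field k] {B : Type*} [Ring B] [Algebra k B]
    {A : Subalgebra k B} (E : RightDoubleExtension k A)
    (𝒜 : ℕ → Submodule k B) [GradedAlgebra 𝒜]
    (hconn : 𝒜 0 = 1)
    (hfin : ∀ n, FiniteDimensional k (𝒜 n))
    (hAgr : ∀ a : B, a ∈ A → ∀ n, ((DirectSum.decompose 𝒜 a n : 𝒜 n) : B) ∈ A)
    (hy₁ : ∃ d, 0 < d ∧ E.y₁ ∈ 𝒜 d) (hy₂ : ∃ d, 0 < d ∧ E.y₂ ∈ 𝒜 d)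
    (hp : E.p₁₂ ≠ 0) (hσ : SigmaInvertible E) :
    ({w : B | ∃ a b c : A, w = (a : B) * E.y₁ + (b : B) * E.y₂ + (c : B)} =
      {w : B | ∃ a b c : A, w = E.y₁ * (a : B) + E.y₂ * (b : B) + (c : B)}) ∧
    (∃ τ'₁ τ'₂ τ'₀ : A,
      E.y₁ * E.y₂ = E.p₁₂⁻¹ • (E.y₂ * E.y₁) - (E.p₁₂⁻¹ * E.p₁₁) • (E.y₁ * E.y₁)
        + E.y₁ * (τ'₁ : B) + E.y₂ * (τ'₂ : B) + (τ'₀ : B)) ∧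
    (∀ b : B, ∃! f : ℕ × ℕ →₀ A,
      b = f.sum fun n a => (E.y₂ ^ n.1 * E.y₁ ^ n.2) * (a : B)) := by
  classical
  obtain ⟨φ₁₁, φ₁₂, φ₂₁, φ₂₂, hφ1, hφmul, hφ3, hφ4⟩ := hσ
  -- the fundamental right-to-left commutation identities
  have hc₁ : ∀ r : A, (r : B) * E.y₁
      = E.y₁ * ((φ₁₁ r : A) : B) + E.y₂ * ((φ₂₁ r : A) : B)
        + ((-(E.δ₁ (φ₁₁ r) + E.δ₂ (φ₂₁ r)) : A) : B) := by
    intro r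
    have e1 : ((E.σ₁₁ (φ₁₁ r) : A) : B) + ((E.σ₂₁ (φ₂₁ r) : A) : B) = (r : B) := by
      exact_mod_cast congrArg (Subtype.val) (hφ4 r).1
    have e2 : ((E.σ₁₂ (φ₁₁ r) : A) : B) + ((E.σ₂₂ (φ₂₁ r) : A) : B) = 0 := by
      exact_mod_cast congrArg (Subtype.val) (hφ4 r).2.1
    rw [E.R2₁ (φ₁₁ r), E.R2₂ (φ₂₁ r), ← e1, eq_neg_of_add_eq_zero_left e2]
    push_cast
    noncomm_ring
  have hc₂ : ∀ r : A, (r : B) * E.y₂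
      = E.y₁ * ((φ₁₂ r : A) : B) + E.y₂ * ((φ₂₂ r : A) : B)
        + ((-(E.δ₁ (φ₁₂ r) + E.δ₂ (φ₂₂ r)) : A) : B) := by
    intro r
    have e1 : ((E.σ₁₂ (φ₁₂ r) : A) : B) + ((E.σ₂₂ (φ₂₂ r) : A) : B) = (r : B) := by
      exact_mod_cast congrArg (Subtype.val) (hφ4 r).2.2.2
    have e2 : ((E.σ₁₁ (φ₁₂ r) : A) : B) + ((E.σ₂₁ (φ₂₂ r) : A) : B) = 0 := by
      exact_mod_cast congrArg (Subtype.val) (hφ4 r).2.2.1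
    rw [E.R2₁ (φ₁₂ r), E.R2₂ (φ₂₂ r), ← e1, eq_neg_of_add_eq_zero_left e2]
    push_cast
    noncomm_ring
  -- the left relation (L1)
  set τ'₁ : A := (-E.p₁₂⁻¹) • (φ₁₁ E.τ₁ + φ₁₂ E.τ₂) with hτ'₁
  set τ'₂ : A := (-E.p₁₂⁻¹) • (φ₂₁ E.τ₁ + φ₂₂ E.τ₂) with hτ'₂
  set τ'₀ : A := E.p₁₂⁻¹ • (E.δ₁ (φ₁₁ E.τ₁) + E.δ₂ (φ₂₁ E.τ₁)
      + (E.δ₁ (φ₁₂ E.τ₂) + E.δ₂ (φ₂₂ E.τ₂)) - E.τ₀) with hτ'₀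
  have hpre : E.p₁₂ • (E.y₁ * E.y₂) = E.y₂ * E.y₁ - E.p₁₁ • (E.y₁ * E.y₁)
      - (E.τ₁ : B) * E.y₁ - (E.τ₂ : B) * E.y₂ - (E.τ₀ : B) := by
    rw [E.R1]; abel
  have hL1 : E.y₁ * E.y₂ = E.p₁₂⁻¹ • (E.y₂ * E.y₁) - (E.p₁₂⁻¹ * E.p₁₁) • (E.y₁ * E.y₁)
      + E.y₁ * (τ'₁ : B) + E.y₂ * (τ'₂ : B) + (τ'₀ : B) := by
    rw [← inv_smul_smul₀ hp (E.y₁ * E.y₂), hpre, hτ'₁, hτ'₂, hτ'₀, hc₁ E.τ₁, hc₂ E.τ₂]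
    push_cast
    simp only [smul_sub, smul_add, smul_neg, mul_add, mul_neg, mul_smul_comm, smul_smul,
      neg_add, neg_neg, neg_smul]
    module
  have hL1' : E.y₁ * E.y₂ = E.p₁₂⁻¹ • (E.y₂ * E.y₁) + (-(E.p₁₂⁻¹ * E.p₁₁)) • (E.y₁ * E.y₁)
      + E.y₁ * (τ'₁ : B) + E.y₂ * (τ'₂ : B) + (τ'₀ : B) := by
    rw [hL1, neg_smul, sub_eq_add_neg]
  -- part (i)
  have part1 : ({w : B | ∃ a b c : A, w = (a : B) * E.y₁ + (b : B) * E.y₂ + (c : B)} =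
      {w : B | ∃ a b c : A, w = E.y₁ * (a : B) + E.y₂ * (b : B) + (c : B)}) := by
    ext w
    constructor
    · rintro ⟨a, b, c, rfl⟩
      refine ⟨φ₁₁ a + φ₁₂ b, φ₂₁ a + φ₂₂ b,
        c + (-(E.δ₁ (φ₁₁ a) + E.δ₂ (φ₂₁ a))) + (-(E.δ₁ (φ₁₂ b) + E.δ₂ (φ₂₂ b))), ?_⟩
      rw [hc₁ a, hc₂ b]
      push_cast
      noncomm_ring
    · rintro ⟨a, b, c, rfl⟩
      refine ⟨E.σ₁₁ a + E.σ₂₁ b, E.σ₁₂ a + E.σ₂₂ b, E.δ₁ a + E.δ₂ b + c, ?_⟩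
      rw [E.R2₁ a, E.R2₂ b]
      push_cast
      noncomm_ring
  -- part (iii)
  obtain ⟨dd₁, hd₁, hy1⟩ := hy₁
  obtain ⟨dd₂, hd₂, hy2⟩ := hy₂
  have hex := DoubleExtAux.right_exists E hc₁ hc₂ hL1'
  have huniq := right_unique E 𝒜 hconn hfin hAgr hd₁ hd₂ hy1 hy2 hex
  refine ⟨part1, ⟨τ'₁, τ'₂, τ'₀, hL1⟩, ?_⟩
  intro x
  obtain ⟨f, hf⟩ := hex x
  exact ⟨f, hf, fun g hg => huniq g f (by rw [← hg, ← hf])⟩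
end

section
/- Let B be a right double extension of A with data (P, σ, δ, τ), and suppose there is a k-algebra homomorphism ε : A → k with kernel m such that σᵢⱼ(m) ⊆ m for all i, j ∈ {1,2}, δᵢ(m) ⊆ m for i = 1, 2, and τ₁, τ₂, τ₀ ∈ m (this holds for instance when B is connected graded with y₁, y₂ of positive degree and m = A_{≥1}). Let I be the two-sided ideal of B generated by m. Then there is a k-algebra isomorphism B/I ≅ k⟨Y₁, Y₂⟩/(Y₂Y₁ − p₁₂·Y₁Y₂ − p₁₁·Y₁²) sending the images of y₁ and y₂ to Y₁ and Y₂ respectively (the right-hand side is the quotient of the free algebra on Y₁, Y₂ by the two-sided ideal generated by Y₂Y₁ − p₁₂Y₁Y₂ − p₁₁Y₁²). -/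
namespace RightDoubleExtension

variable {k : Type*} [Field k] {B : Type*} [Ring B] [Algebra k B]
    {A : Subalgebra k B} (E : RightDoubleExtension k A)

/-- The quadratic relation. -/
abbrev Rel : FreeAlgebra k (Fin 2) → FreeAlgebra k (Fin 2) → Prop := fun a b =>
  a = FreeAlgebra.ι k 1 * FreeAlgebra.ι k 0 ∧
  b = E.p₁₂ • (FreeAlgebra.ι k 0 * FreeAlgebra.ι k 1)
    + E.p₁₁ • (FreeAlgebra.ι k 0 * FreeAlgebra.ι k 0)

/-- The quadratic algebra. -/
abbrev Q := RingQuot E.Rel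

/-- Images of the two generators. -/
noncomputable def Y (i : Fin 2) : E.Q := RingQuot.mkAlgHom k E.Rel (FreeAlgebra.ι k i)

lemma Yrel : E.Y 1 * E.Y 0 = E.p₁₂ • (E.Y 0 * E.Y 1) + E.p₁₁ • (E.Y 0 * E.Y 0) := by
  have h := RingQuot.mkAlgHom_rel k (s := E.Rel)
    (x := FreeAlgebra.ι k 1 * FreeAlgebra.ι k 0)
    (y := E.p₁₂ • (FreeAlgebra.ι k 0 * FreeAlgebra.ι k 1)
      + E.p₁₁ • (FreeAlgebra.ι k 0 * FreeAlgebra.ι k 0)) ⟨rfl, rfl⟩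
  simpa [Y, map_add, map_mul, map_smul] using h

/-- The monomial `y₁^{n₁} y₂^{n₂}`. -/
def mono (n : ℕ × ℕ) : B := E.y₁ ^ n.1 * E.y₂ ^ n.2

/-- The corresponding monomial in `Q`. -/
noncomputable def Ymono (n : ℕ × ℕ) : E.Q := E.Y 0 ^ n.1 * E.Y 1 ^ n.2

/-- Expansion of a finitely supported coefficient function. -/
def expand (f : ℕ × ℕ →₀ A) : B := f.sum fun n a => (a : B) * E.mono n

@[simp] lemma expand_zero : E.expand 0 = 0 := Finsupp.sum_zero_index

@[simp] lemma expand_single (n : ℕ × ℕ) (a : A) :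
    E.expand (Finsupp.single n a) = (a : B) * E.mono n := by
  rw [expand, Finsupp.sum_single_index]; simp

lemma expand_add (f g : ℕ × ℕ →₀ A) : E.expand (f + g) = E.expand f + E.expand g := by
  rw [expand, Finsupp.sum_add_index' (by simp) (by intros; push_cast; rw [add_mul])]; rfl

/-- Coordinates of an element with respect to the basis. -/
noncomputable def coord (b : B) : ℕ × ℕ →₀ A := (E.basis b).exists.choose

lemma expand_coord (b : B) : E.expand (E.coord b) = b :=
  ((E.basis b).exists.choose_spec).symm

lemma coord_eq {b : B} {f : ℕ × ℕ →₀ A} (h : b = E.expand f) : E.coord b = f :=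
  (E.basis b).unique (E.expand_coord b).symm h

section pfun

variable (ε : A →ₐ[k] k)

/-- The underlying function of the projection `B → Q`. -/
noncomputable def pfun (b : B) : E.Q :=
  (E.coord b).sum fun n a => ε a • E.Ymono n

lemma pfun_expand (f : ℕ × ℕ →₀ A) :
    E.pfun ε (E.expand f) = f.sum fun n a => ε a • E.Ymono n := by
  rw [pfun, E.coord_eq rfl]

@[simp] lemma pfun_single (n : ℕ × ℕ) (a : A) :
    E.pfun ε ((a : B) * E.mono n) = ε a • E.Ymono n := by
  rw [← E.expand_single, pfun_expand, Finsupp.sum_single_index (by simp)]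

@[simp] lemma pfun_zero : E.pfun ε 0 = 0 := by
  have : (0 : B) = E.expand 0 := (E.expand_zero).symm
  rw [pfun, E.coord_eq this, Finsupp.sum_zero_index]

lemma pfun_mono (n : ℕ × ℕ) : E.pfun ε (E.mono n) = E.Ymono n := by
  have : E.mono n = ((1 : A) : B) * E.mono n := by simp
  rw [this, pfun_single]; simp

lemma pfun_add (b b' : B) : E.pfun ε (b + b') = E.pfun ε b + E.pfun ε b' := by
  have hb := E.expand_coord b
  have hb' := E.expand_coord b'
  have : b + b' = E.expand (E.coord b + E.coord b') := by
    rw [E.expand_add, hb, hb']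
  rw [pfun, E.coord_eq this,
    Finsupp.sum_add_index' (by simp) (by intros; rw [map_add, add_smul])]
  rfl

lemma pfun_one : E.pfun ε 1 = 1 := by
  have : (1 : B) = ((1 : A) : B) * E.mono (0, 0) := by simp [mono]
  rw [this, pfun_single]; simp [Ymono]

lemma expand_smul (c : k) (f : ℕ × ℕ →₀ A) : E.expand (c • f) = c • E.expand f := by
  rw [expand, Finsupp.sum_smul_index' (by simp), expand, Finsupp.smul_sum]
  refine Finsupp.sum_congr fun n _ => ?_
  push_cast
  rw [smul_mul_assoc]

lemma pfun_smul (c : k) (b : B) : E.pfun ε (c • b) = c • E.pfun ε b := by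
  have : c • b = E.expand (c • E.coord b) := by
    rw [E.expand_smul, E.expand_coord]
  rw [pfun, E.coord_eq this, Finsupp.sum_smul_index' (by simp), pfun, Finsupp.smul_sum]
  refine Finsupp.sum_congr fun n _ => ?_
  rw [map_smul, smul_eq_mul, mul_smul]

lemma pfun_Amul (a : A) (b : B) : E.pfun ε ((a : B) * b) = ε a • E.pfun ε b := by
  have hb := E.expand_coord b
  rw [← hb]
  generalize E.coord b = f
  induction f using Finsupp.induction with
  | zero => simp
  | single_add n a' f _ _ ih =>
    rw [E.expand_add, mul_add, pfun_add, pfun_add, E.expand_single, ← mul_assoc,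
      ← MulMemClass.coe_mul, pfun_single, pfun_single, ih, map_mul, smul_add, mul_smul]

end pfun

section one

lemma coord_r2₁ :
    Finsupp.single ((1:ℕ), (0:ℕ)) (1 : A) =
      Finsupp.single ((1:ℕ),(0:ℕ)) (E.σ₁₁ 1) + Finsupp.single ((0:ℕ),(1:ℕ)) (E.σ₁₂ 1)
        + Finsupp.single ((0:ℕ),(0:ℕ)) (E.δ₁ 1) := by
  have h1 : E.y₁ = E.expand (Finsupp.single (1, 0) (1 : A)) := by simp [mono]
  have h2 : E.y₁ = E.expand (Finsupp.single ((1:ℕ),(0:ℕ)) (E.σ₁₁ 1)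
      + Finsupp.single ((0:ℕ),(1:ℕ)) (E.σ₁₂ 1) + Finsupp.single ((0:ℕ),(0:ℕ)) (E.δ₁ 1)) := by
    have := E.R2₁ 1
    simp only [Subalgebra.coe_one, mul_one] at this
    rw [E.expand_add, E.expand_add, expand_single, expand_single, expand_single]
    simpa [mono] using this
  rw [← E.coord_eq h1, ← E.coord_eq h2]

lemma coord_r2₂ :
    Finsupp.single ((0:ℕ), (1:ℕ)) (1 : A) =
      Finsupp.single ((1:ℕ),(0:ℕ)) (E.σ₂₁ 1) + Finsupp.single ((0:ℕ),(1:ℕ)) (E.σ₂₂ 1)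
        + Finsupp.single ((0:ℕ),(0:ℕ)) (E.δ₂ 1) := by
  have h1 : E.y₂ = E.expand (Finsupp.single (0, 1) (1 : A)) := by simp [mono]
  have h2 : E.y₂ = E.expand (Finsupp.single ((1:ℕ),(0:ℕ)) (E.σ₂₁ 1)
      + Finsupp.single ((0:ℕ),(1:ℕ)) (E.σ₂₂ 1) + Finsupp.single ((0:ℕ),(0:ℕ)) (E.δ₂ 1)) := by
    have := E.R2₂ 1
    simp only [Subalgebra.coe_one, mul_one] at this
    rw [E.expand_add, E.expand_add, expand_single, expand_single, expand_single]
    simpa [mono] using this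
  rw [← E.coord_eq h1, ← E.coord_eq h2]

lemma sigma₁₁_one : E.σ₁₁ 1 = 1 := by
  have h := DFunLike.congr_fun E.coord_r2₁ ((1:ℕ),(0:ℕ))
  simpa [Finsupp.single_apply, Prod.ext_iff] using h.symm

lemma sigma₁₂_one : E.σ₁₂ 1 = 0 := by
  have h := DFunLike.congr_fun E.coord_r2₁ ((0:ℕ),(1:ℕ))
  simpa [Finsupp.single_apply, Prod.ext_iff] using h.symm

lemma delta₁_one : E.δ₁ 1 = 0 := by
  have h := DFunLike.congr_fun E.coord_r2₁ ((0:ℕ),(0:ℕ))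
  simpa [Finsupp.single_apply, Prod.ext_iff] using h.symm

lemma sigma₂₁_one : E.σ₂₁ 1 = 0 := by
  have h := DFunLike.congr_fun E.coord_r2₂ ((1:ℕ),(0:ℕ))
  simpa [Finsupp.single_apply, Prod.ext_iff] using h.symm

lemma sigma₂₂_one : E.σ₂₂ 1 = 1 := by
  have h := DFunLike.congr_fun E.coord_r2₂ ((0:ℕ),(1:ℕ))
  simpa [Finsupp.single_apply, Prod.ext_iff] using h.symm

lemma delta₂_one : E.δ₂ 1 = 0 := by
  have h := DFunLike.congr_fun E.coord_r2₂ ((0:ℕ),(0:ℕ))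
  simpa [Finsupp.single_apply, Prod.ext_iff] using h.symm

end one

section eps

variable (ε : A →ₐ[k] k)

lemma sub_eps_mem (a : A) : a - ε a • 1 ∈ RingHom.ker ε := by
  rw [RingHom.mem_ker, map_sub, map_smul, map_one, smul_eq_mul, mul_one, sub_self]

lemma eps_linear (σ : A →ₗ[k] A) (a : A) (h : σ (a - ε a • 1) ∈ RingHom.ker ε) :
    ε (σ a) = ε a * ε (σ 1) := by
  rw [RingHom.mem_ker] at h
  have hs : σ a = σ (a - ε a • 1) + ε a • σ 1 := by
    rw [map_sub, map_smul, sub_add_cancel]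
  rw [hs, map_add, h, zero_add, map_smul, smul_eq_mul]

end eps

section main

variable (ε : A →ₐ[k] k)
variable (hσ : ∀ a ∈ RingHom.ker ε, E.σ₁₁ a ∈ RingHom.ker ε ∧ E.σ₁₂ a ∈ RingHom.ker ε ∧
        E.σ₂₁ a ∈ RingHom.ker ε ∧ E.σ₂₂ a ∈ RingHom.ker ε)
variable (hδ : ∀ a ∈ RingHom.ker ε, E.δ₁ a ∈ RingHom.ker ε ∧ E.δ₂ a ∈ RingHom.ker ε)
variable (hτ : E.τ₁ ∈ RingHom.ker ε ∧ E.τ₂ ∈ RingHom.ker ε ∧ E.τ₀ ∈ RingHom.ker ε)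

include hσ in
lemma eps_sigma₁₁ (a : A) : ε (E.σ₁₁ a) = ε a := by
  rw [eps_linear ε _ _ (hσ _ (sub_eps_mem ε a)).1, E.sigma₁₁_one, map_one, mul_one]

include hσ in
lemma eps_sigma₁₂ (a : A) : ε (E.σ₁₂ a) = 0 := by
  rw [eps_linear ε _ _ (hσ _ (sub_eps_mem ε a)).2.1, E.sigma₁₂_one, map_zero, mul_zero]

include hσ in
lemma eps_sigma₂₁ (a : A) : ε (E.σ₂₁ a) = 0 := by
  rw [eps_linear ε _ _ (hσ _ (sub_eps_mem ε a)).2.2.1, E.sigma₂₁_one, map_zero, mul_zero]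

include hσ in
lemma eps_sigma₂₂ (a : A) : ε (E.σ₂₂ a) = ε a := by
  rw [eps_linear ε _ _ (hσ _ (sub_eps_mem ε a)).2.2.2, E.sigma₂₂_one, map_one, mul_one]

include hδ in
lemma eps_delta₁ (a : A) : ε (E.δ₁ a) = 0 := by
  rw [eps_linear ε _ _ (hδ _ (sub_eps_mem ε a)).1, E.delta₁_one, map_zero, mul_zero]

include hδ in
lemma eps_delta₂ (a : A) : ε (E.δ₂ a) = 0 := by
  rw [eps_linear ε _ _ (hδ _ (sub_eps_mem ε a)).2, E.delta₂_one, map_zero, mul_zero]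

lemma y₁_mul_mono (n : ℕ × ℕ) : E.y₁ * E.mono n = E.mono (n.1 + 1, n.2) := by
  rw [mono, mono, ← mul_assoc, ← pow_succ']

lemma Y_mul_Ymono (n : ℕ × ℕ) : E.Y 0 * E.Ymono n = E.Ymono (n.1 + 1, n.2) := by
  rw [Ymono, Ymono, ← mul_assoc, ← pow_succ']

include hσ hδ in
lemma pfun_y₁_mul (b : B) : E.pfun ε (E.y₁ * b) = E.Y 0 * E.pfun ε b := by
  rw [← E.expand_coord b]
  generalize E.coord b = f
  induction f using Finsupp.induction with
  | zero => simp
  | single_add n a f _ _ ih =>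
    have key : E.y₁ * ((a : B) * E.mono n)
        = (E.σ₁₁ a : B) * E.mono (n.1 + 1, n.2)
          + ((E.σ₁₂ a : B) * (E.y₂ * E.mono n) + (E.δ₁ a : B) * E.mono n) := by
      rw [← mul_assoc, E.R2₁ a, ← E.y₁_mul_mono]
      noncomm_ring
    rw [E.expand_add, mul_add, E.pfun_add, E.pfun_add, E.expand_single, key,
      E.pfun_add, E.pfun_add, E.pfun_single, E.pfun_single, E.pfun_single,
      E.pfun_Amul, ih, eps_sigma₁₁ E ε hσ, eps_sigma₁₂ E ε hσ, eps_delta₁ E ε hδ]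
    rw [mul_add, ← E.Y_mul_Ymono, mul_smul_comm]
    simp

include hσ hδ hτ in
lemma pfun_y₂_mono (m n₂ : ℕ) :
    E.pfun ε (E.y₂ * E.mono (m, n₂)) = E.Y 1 * E.Ymono (m, n₂) := by
  induction m with
  | zero =>
    have h : E.y₂ * E.mono (0, n₂) = E.mono (0, n₂ + 1) := by
      rw [mono, mono]
      simp [← pow_succ']
    rw [h, E.pfun_mono, Ymono, Ymono]
    simp [← pow_succ']
  | succ m ih =>
    have h1 : E.y₂ * E.mono (m + 1, n₂) = (E.y₂ * E.y₁) * E.mono (m, n₂) := by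
      rw [mono, mono, pow_succ']
      noncomm_ring
    have h2 : (E.y₂ * E.y₁) * E.mono (m, n₂)
        = E.p₁₂ • (E.y₁ * (E.y₂ * E.mono (m, n₂)))
          + (E.p₁₁ • (E.y₁ * (E.y₁ * E.mono (m, n₂)))
          + ((E.τ₁ : B) * (E.y₁ * E.mono (m, n₂))
          + ((E.τ₂ : B) * (E.y₂ * E.mono (m, n₂)) + (E.τ₀ : B) * E.mono (m, n₂)))) := by
      rw [E.R1]
      noncomm_ring
    rw [h1, h2, E.pfun_add, E.pfun_add, E.pfun_add, E.pfun_add,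
      E.pfun_smul, E.pfun_smul, E.pfun_Amul, E.pfun_Amul, E.pfun_Amul,
      pfun_y₁_mul E ε hσ hδ, pfun_y₁_mul E ε hσ hδ, ih, E.pfun_mono,
      hτ.1, hτ.2.1, hτ.2.2, E.y₁_mul_mono (m, n₂), E.pfun_mono]
    have hY : E.Y 1 * E.Ymono (m + 1, n₂) = (E.Y 1 * E.Y 0) * E.Ymono (m, n₂) := by
      rw [Ymono, Ymono, pow_succ']
      noncomm_ring
    rw [hY, E.Yrel, add_mul, smul_mul_assoc, smul_mul_assoc, mul_assoc, mul_assoc]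
    simp only [E.Y_mul_Ymono]
    simp

lemma pfun_y₂_mono' (hσ' : ∀ a ∈ RingHom.ker ε, E.σ₁₁ a ∈ RingHom.ker ε ∧ E.σ₁₂ a ∈ RingHom.ker ε ∧
        E.σ₂₁ a ∈ RingHom.ker ε ∧ E.σ₂₂ a ∈ RingHom.ker ε)
    (hδ' : ∀ a ∈ RingHom.ker ε, E.δ₁ a ∈ RingHom.ker ε ∧ E.δ₂ a ∈ RingHom.ker ε)
    (hτ' : E.τ₁ ∈ RingHom.ker ε ∧ E.τ₂ ∈ RingHom.ker ε ∧ E.τ₀ ∈ RingHom.ker ε)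
    (n : ℕ × ℕ) :
    E.pfun ε (E.y₂ * E.mono n) = E.Y 1 * E.Ymono n := by
  obtain ⟨m, n₂⟩ := n
  exact pfun_y₂_mono E ε hσ' hδ' hτ' m n₂

include hσ hδ hτ in
lemma pfun_y₂_mul (b : B) : E.pfun ε (E.y₂ * b) = E.Y 1 * E.pfun ε b := by
  rw [← E.expand_coord b]
  generalize E.coord b = f
  induction f using Finsupp.induction with
  | zero => simp
  | single_add n a f _ _ ih =>
    have key : E.y₂ * ((a : B) * E.mono n)
        = (E.σ₂₁ a : B) * (E.y₁ * E.mono n)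
          + ((E.σ₂₂ a : B) * (E.y₂ * E.mono n) + (E.δ₂ a : B) * E.mono n) := by
      rw [← mul_assoc, E.R2₂ a]
      noncomm_ring
    rw [E.expand_add, mul_add, E.pfun_add, E.pfun_add, E.expand_single, key,
      E.pfun_add, E.pfun_add, E.pfun_Amul, E.pfun_Amul, E.pfun_single,
      ih, eps_sigma₂₁ E ε hσ, eps_sigma₂₂ E ε hσ, eps_delta₂ E ε hδ,
      pfun_y₂_mono' E ε hσ hδ hτ n]
    rw [mul_add, E.pfun_single, mul_smul_comm]
    simp

include hσ hδ hτ in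
lemma pfun_pow₁_mul (m : ℕ) (x : B) :
    E.pfun ε (E.y₁ ^ m * x) = E.Y 0 ^ m * E.pfun ε x := by
  induction m with
  | zero => simp
  | succ m ih =>
    rw [pow_succ', mul_assoc, pfun_y₁_mul E ε hσ hδ, ih, pow_succ', mul_assoc]

include hσ hδ hτ in
lemma pfun_pow₂_mul (n : ℕ) (x : B) :
    E.pfun ε (E.y₂ ^ n * x) = E.Y 1 ^ n * E.pfun ε x := by
  induction n with
  | zero => simp
  | succ n ih =>
    rw [pow_succ', mul_assoc, pfun_y₂_mul E ε hσ hδ hτ, ih, pow_succ', mul_assoc]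

include hσ hδ hτ in
lemma pfun_mul (b b' : B) :
    E.pfun ε (b * b') = E.pfun ε b * E.pfun ε b' := by
  rw [← E.expand_coord b]
  generalize E.coord b = f
  induction f using Finsupp.induction with
  | zero => simp
  | single_add n a f _ _ ih =>
    have h3 : E.pfun ε (E.mono n * b') = E.Ymono n * E.pfun ε b' := by
      rw [mono, mul_assoc, pfun_pow₁_mul E ε hσ hδ hτ, pfun_pow₂_mul E ε hσ hδ hτ,
        Ymono, mul_assoc]
    rw [E.expand_add, add_mul, E.pfun_add, E.pfun_add, E.expand_single, mul_assoc,
      E.pfun_Amul, ih, E.pfun_single, h3, add_mul, smul_mul_assoc]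

lemma pfun_y₁ : E.pfun ε E.y₁ = E.Y 0 := by
  have h : E.y₁ = E.mono (1, 0) := by simp [mono]
  rw [h, E.pfun_mono]
  simp [Ymono]

lemma pfun_y₂ : E.pfun ε E.y₂ = E.Y 1 := by
  have h : E.y₂ = E.mono (0, 1) := by simp [mono]
  rw [h, E.pfun_mono]
  simp [Ymono]

include hσ hδ hτ in
/-- The projection, as an algebra homomorphism. -/
noncomputable def piHom : B →ₐ[k] E.Q :=
  AlgHom.mk'
    { toFun := E.pfun ε
      map_one' := E.pfun_one ε
      map_mul' := pfun_mul E ε hσ hδ hτ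
      map_zero' := E.pfun_zero ε
      map_add' := E.pfun_add ε }
    (fun c x => E.pfun_smul ε c x)

lemma piHom_apply (b : B) : piHom E ε hσ hδ hτ b = E.pfun ε b := rfl

include hσ hδ hτ in
lemma piHom_surjective : Function.Surjective (piHom E ε hσ hδ hτ) := by
  intro q
  obtain ⟨x, rfl⟩ := RingQuot.mkAlgHom_surjective k E.Rel q
  induction x using FreeAlgebra.induction with
  | grade0 c =>
    exact ⟨algebraMap k B c, by rw [AlgHom.commutes, AlgHom.commutes]⟩
  | grade1 i =>
    fin_cases i
    · exact ⟨E.y₁, E.pfun_y₁ ε⟩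
    · exact ⟨E.y₂, E.pfun_y₂ ε⟩
  | mul x y ihx ihy =>
    obtain ⟨b, hb⟩ := ihx
    obtain ⟨b', hb'⟩ := ihy
    exact ⟨b * b', by rw [map_mul, map_mul, hb, hb']⟩
  | add x y ihx ihy =>
    obtain ⟨b, hb⟩ := ihx
    obtain ⟨b', hb'⟩ := ihy
    exact ⟨b + b', by rw [map_add, map_add, hb, hb']⟩

end main

end RightDoubleExtension

open RightDoubleExtension

/-- If `m = ker ε` is a `σ`-, `δ`-stable codimension-1 ideal of `A` containing the tail
`τ`, and `I` is the two-sided ideal of `B` generated by `m`, then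
`B/I ≅ k⟨Y₁,Y₂⟩/(Y₂Y₁ − p₁₂Y₁Y₂ − p₁₁Y₁²)`, with the images of `y₁, y₂` mapping to
`Y₁, Y₂`.  (The isomorphism is given as a surjective algebra map `π` with kernel `I`.) -/
theorem quotient_iso_free_quadratic
    {k : Type*} [Field k] {B : Type*} [Ring B] [Algebra k B]
    {A : Subalgebra k B} (E : RightDoubleExtension k A)
    (ε : A →ₐ[k] k)
    (hσ : ∀ a ∈ RingHom.ker ε, E.σ₁₁ a ∈ RingHom.ker ε ∧ E.σ₁₂ a ∈ RingHom.ker ε ∧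
        E.σ₂₁ a ∈ RingHom.ker ε ∧ E.σ₂₂ a ∈ RingHom.ker ε)
    (hδ : ∀ a ∈ RingHom.ker ε, E.δ₁ a ∈ RingHom.ker ε ∧ E.δ₂ a ∈ RingHom.ker ε)
    (hτ : E.τ₁ ∈ RingHom.ker ε ∧ E.τ₂ ∈ RingHom.ker ε ∧ E.τ₀ ∈ RingHom.ker ε) :
    ∃ π : B →ₐ[k] RingQuot (fun a b : FreeAlgebra k (Fin 2) =>
        a = FreeAlgebra.ι k 1 * FreeAlgebra.ι k 0 ∧
        b = E.p₁₂ • (FreeAlgebra.ι k 0 * FreeAlgebra.ι k 1)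
          + E.p₁₁ • (FreeAlgebra.ι k 0 * FreeAlgebra.ι k 0)),
      Function.Surjective π ∧
      (∀ b : B, π b = 0 ↔
        b ∈ TwoSidedIdeal.span ((fun a : A => (a : B)) '' (RingHom.ker ε : Set A))) ∧
      π E.y₁ = RingQuot.mkAlgHom k _ (FreeAlgebra.ι k 0) ∧
      π E.y₂ = RingQuot.mkAlgHom k _ (FreeAlgebra.ι k 1) := by
  classical
  set I : TwoSidedIdeal B :=
    TwoSidedIdeal.span ((fun a : A => (a : B)) '' (RingHom.ker ε : Set A)) with hI
  set mkQ : B →+* I.ringCon.Quotient := I.ringCon.mk' with hmkQ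
  have hmem : ∀ x : B, mkQ x = 0 ↔ x ∈ I := by
    intro x
    rw [← TwoSidedIdeal.mem_ker mkQ, hmkQ, TwoSidedIdeal.ker_ringCon_mk']
  have hmkQ_surj : Function.Surjective mkQ := fun q =>
    Quotient.inductionOn' q fun x => ⟨x, rfl⟩
  letI : Algebra k I.ringCon.Quotient :=
    { smul := fun c q => c • q
      algebraMap := mkQ.comp (algebraMap k B)
      commutes' := by
        intro c x
        obtain ⟨b, rfl⟩ := hmkQ_surj x
        show mkQ _ * mkQ b = mkQ b * mkQ _
        rw [← map_mul, ← map_mul, Algebra.commutes]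
      smul_def' := by
        intro c x
        obtain ⟨b, rfl⟩ := hmkQ_surj x
        show (c • mkQ b : I.ringCon.Quotient) = mkQ _ * mkQ b
        rw [← map_mul, ← Algebra.smul_def]
        rfl }
  have hsm : ∀ (c : k) (x : B), mkQ (c • x) = c • mkQ x := fun c x => rfl
  have hgen : ∀ a : A, a ∈ RingHom.ker ε → mkQ (a : B) = 0 := fun a ha =>
    (hmem _).mpr (TwoSidedIdeal.subset_span ⟨a, ha, rfl⟩)
  have hconst : ∀ a : A, mkQ (a : B) = ε a • 1 := by
    intro a
    have h1 : (a : B) = ((a - ε a • (1 : A) : A) : B) + ε a • (1 : B) := by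
      push_cast
      rw [sub_add_cancel]
    rw [h1, map_add, hgen _ (sub_eps_mem ε a), zero_add, hsm, map_one]
  set g : Fin 2 → I.ringCon.Quotient := ![mkQ E.y₁, mkQ E.y₂] with hg
  set F : FreeAlgebra k (Fin 2) →ₐ[k] I.ringCon.Quotient := FreeAlgebra.lift k g with hF
  have hg0 : g 0 = mkQ E.y₁ := rfl
  have hg1 : g 1 = mkQ E.y₂ := rfl
  have hrel : ∀ ⦃x y⦄, E.Rel x y → F x = F y := by
    rintro x y ⟨rfl, rfl⟩
    simp only [hF, map_mul, map_add, map_smul, FreeAlgebra.lift_ι_apply]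
    rw [hg0, hg1, ← map_mul, E.R1]
    simp only [map_add, map_mul, hsm]
    rw [hgen _ hτ.1, hgen _ hτ.2.1, hgen _ hτ.2.2]
    simp
  set θ : E.Q →ₐ[k] I.ringCon.Quotient := RingQuot.liftAlgHom k ⟨F, hrel⟩ with hθ
  have hθY : ∀ i, θ (E.Y i) = g i := by
    intro i
    rw [hθ, RightDoubleExtension.Y, RingQuot.liftAlgHom_mkAlgHom_apply, hF,
      FreeAlgebra.lift_ι_apply]
  have hθπ : ∀ b : B, θ (E.pfun ε b) = mkQ b := by
    intro b
    rw [← E.expand_coord b]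
    generalize E.coord b = f
    induction f using Finsupp.induction with
    | zero => simp
    | single_add n a f _ _ ih =>
      rw [E.expand_add, E.pfun_add, map_add, ih, E.expand_single, E.pfun_single,
        map_add (f := mkQ)]
      congr 1
      have h4 : θ (E.Ymono n) = mkQ (E.mono n) := by
        rw [RightDoubleExtension.Ymono, RightDoubleExtension.mono]
        simp only [map_mul, map_pow]
        rw [hθY 0, hθY 1, hg0, hg1]
      rw [map_smul, h4, map_mul, hconst, smul_mul_assoc, one_mul]
  refine ⟨piHom E ε hσ hδ hτ, piHom_surjective E ε hσ hδ hτ, ?_, E.pfun_y₁ ε, E.pfun_y₂ ε⟩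
  intro b
  constructor
  · intro h
    rw [piHom_apply] at h
    exact (hmem b).mp (by rw [← hθπ b, h, map_zero])
  · intro hb
    have hsub : ((fun a : A => (a : B)) '' (RingHom.ker ε : Set A)) ⊆
        (TwoSidedIdeal.ker (piHom E ε hσ hδ hτ) : Set B) := by
      rintro - ⟨a, ha, rfl⟩
      rw [SetLike.mem_coe, TwoSidedIdeal.mem_ker]
      show E.pfun ε (a : B) = 0
      have h1 : (a : B) = (a : B) * E.mono (0, 0) := by simp [RightDoubleExtension.mono]
      have ha' : ε a = 0 := ha
      rw [h1, E.pfun_single, ha', zero_smul]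
    exact (TwoSidedIdeal.mem_ker _).mp (TwoSidedIdeal.mem_span_iff.mp hb _ hsub)
end

section
/- Let B be a right double extension of A with data (P, σ, δ, τ). Then det σ is a k-algebra endomorphism of A: det σ(1) = 1 and det σ(rs) = det σ(r)·det σ(s) for all r, s ∈ A. -/
namespace RightDoubleExtension

variable {k : Type*} [Field k] {B : Type*} [Ring B] [Algebra k B]
    {A : Subalgebra k B} (E : RightDoubleExtension k A)

lemma combo_eq_zero {a₀ a₁ a₂ a₃ a₄ a₅ : A}
    (h : (a₀ : B) + a₁ * E.y₁ + a₂ * E.y₂ + a₃ * (E.y₁ * E.y₁)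
      + a₄ * (E.y₁ * E.y₂) + a₅ * (E.y₂ * E.y₂) = 0) :
    a₀ = 0 ∧ a₁ = 0 ∧ a₂ = 0 ∧ a₃ = 0 ∧ a₄ = 0 ∧ a₅ = 0 := by
  classical
  let φ : ℕ × ℕ → A → B := fun n a => (a : B) * (E.y₁ ^ n.1 * E.y₂ ^ n.2)
  set F : ℕ × ℕ →₀ A := Finsupp.single (0,0) a₀ + Finsupp.single (1,0) a₁
    + Finsupp.single (0,1) a₂ + Finsupp.single (2,0) a₃
    + Finsupp.single (1,1) a₄ + Finsupp.single (0,2) a₅ with hF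
  have hzero : ∀ n : ℕ × ℕ, φ n 0 = 0 := by intro n; simp [φ]
  have hadd : ∀ (n : ℕ × ℕ) (x y : A), φ n (x + y) = φ n x + φ n y := by
    intro n x y; simp [φ, add_mul]
  have hsum : F.sum φ = (a₀ : B) + a₁ * E.y₁ + a₂ * E.y₂ + a₃ * (E.y₁ * E.y₁)
      + a₄ * (E.y₁ * E.y₂) + a₅ * (E.y₂ * E.y₂) := by
    rw [hF]
    rw [Finsupp.sum_add_index' hzero hadd, Finsupp.sum_add_index' hzero hadd,
      Finsupp.sum_add_index' hzero hadd, Finsupp.sum_add_index' hzero hadd,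
      Finsupp.sum_add_index' hzero hadd]
    rw [Finsupp.sum_single_index (hzero _), Finsupp.sum_single_index (hzero _),
      Finsupp.sum_single_index (hzero _), Finsupp.sum_single_index (hzero _),
      Finsupp.sum_single_index (hzero _), Finsupp.sum_single_index (hzero _)]
    simp [φ, pow_succ, mul_assoc]
  obtain ⟨f, hf, huniq⟩ := E.basis 0
  have h1 : F = f := huniq F (by show (0:B) = F.sum φ; rw [hsum, h])
  have h2 : (0 : ℕ × ℕ →₀ A) = f := huniq 0 (by simp)
  have hF0 : F = 0 := h1.trans h2.symm
  refine ⟨?_, ?_, ?_, ?_, ?_, ?_⟩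
  · have := DFunLike.congr_fun hF0 (0,0); simpa +decide [hF, Finsupp.single_apply] using this
  · have := DFunLike.congr_fun hF0 (1,0); simpa +decide [hF, Finsupp.single_apply] using this
  · have := DFunLike.congr_fun hF0 (0,1); simpa +decide [hF, Finsupp.single_apply] using this
  · have := DFunLike.congr_fun hF0 (2,0); simpa +decide [hF, Finsupp.single_apply] using this
  · have := DFunLike.congr_fun hF0 (1,1); simpa +decide [hF, Finsupp.single_apply] using this
  · have := DFunLike.congr_fun hF0 (0,2); simpa +decide [hF, Finsupp.single_apply] using this

end RightDoubleExtension

namespace RightDoubleExtension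

variable {k : Type*} [Field k] {B : Type*} [Ring B] [Algebra k B]
    {A : Subalgebra k B} (E : RightDoubleExtension k A)

lemma combo_eq {a₀ a₁ a₂ a₃ a₄ a₅ b₀ b₁ b₂ b₃ b₄ b₅ : A}
    (h : (a₀ : B) + a₁ * E.y₁ + a₂ * E.y₂ + a₃ * (E.y₁ * E.y₁)
      + a₄ * (E.y₁ * E.y₂) + a₅ * (E.y₂ * E.y₂)
      = (b₀ : B) + b₁ * E.y₁ + b₂ * E.y₂ + b₃ * (E.y₁ * E.y₁)
      + b₄ * (E.y₁ * E.y₂) + b₅ * (E.y₂ * E.y₂)) :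
    a₀ = b₀ ∧ a₁ = b₁ ∧ a₂ = b₂ ∧ a₃ = b₃ ∧ a₄ = b₄ ∧ a₅ = b₅ := by
  have h0 : ((a₀ - b₀ : A) : B) + (a₁ - b₁ : A) * E.y₁ + (a₂ - b₂ : A) * E.y₂
      + (a₃ - b₃ : A) * (E.y₁ * E.y₁) + (a₄ - b₄ : A) * (E.y₁ * E.y₂)
      + (a₅ - b₅ : A) * (E.y₂ * E.y₂) = 0 := by
    push_cast
    rw [← sub_eq_zero] at h
    rw [← h]
    noncomm_ring
  obtain ⟨h₀, h₁, h₂, h₃, h₄, h₅⟩ := E.combo_eq_zero h0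
  exact ⟨sub_eq_zero.mp h₀, sub_eq_zero.mp h₁, sub_eq_zero.mp h₂,
    sub_eq_zero.mp h₃, sub_eq_zero.mp h₄, sub_eq_zero.mp h₅⟩

end RightDoubleExtension

namespace RightDoubleExtension

variable {k : Type*} [Field k] {B : Type*} [Ring B] [Algebra k B]
    {A : Subalgebra k B} (E : RightDoubleExtension k A)

lemma mul₁ (r s : A) :
    E.σ₁₁ (r * s) = E.σ₁₁ r * E.σ₁₁ s + E.σ₁₂ r * E.σ₂₁ s
    ∧ E.σ₁₂ (r * s) = E.σ₁₁ r * E.σ₁₂ s + E.σ₁₂ r * E.σ₂₂ s := by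
  have e1 : E.y₁ * ((r * s : A) : B)
      = ((E.δ₁ (r*s) : A) : B) + (E.σ₁₁ (r*s) : A) * E.y₁ + (E.σ₁₂ (r*s) : A) * E.y₂
        + ((0:A) : B) * (E.y₁ * E.y₁) + ((0:A) : B) * (E.y₁ * E.y₂)
        + ((0:A) : B) * (E.y₂ * E.y₂) := by
    rw [E.R2₁ (r*s)]; push_cast; noncomm_ring
  have e2 : E.y₁ * ((r * s : A) : B)
      = ((E.σ₁₁ r * E.δ₁ s + E.σ₁₂ r * E.δ₂ s + E.δ₁ r * s : A) : B)
        + ((E.σ₁₁ r * E.σ₁₁ s + E.σ₁₂ r * E.σ₂₁ s : A) : B) * E.y₁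
        + ((E.σ₁₁ r * E.σ₁₂ s + E.σ₁₂ r * E.σ₂₂ s : A) : B) * E.y₂
        + ((0:A) : B) * (E.y₁ * E.y₁) + ((0:A) : B) * (E.y₁ * E.y₂)
        + ((0:A) : B) * (E.y₂ * E.y₂) := by
    calc E.y₁ * ((r * s : A) : B) = E.y₁ * (r : B) * (s : B) := by
          push_cast; rw [mul_assoc]
      _ = ((E.σ₁₁ r : B) * E.y₁ + (E.σ₁₂ r : B) * E.y₂ + (E.δ₁ r : B)) * (s : B) := by
          rw [E.R2₁ r]
      _ = (E.σ₁₁ r : B) * (E.y₁ * (s : B)) + (E.σ₁₂ r : B) * (E.y₂ * (s : B))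
          + (E.δ₁ r : B) * (s : B) := by noncomm_ring
      _ = (E.σ₁₁ r : B) * ((E.σ₁₁ s : B) * E.y₁ + (E.σ₁₂ s : B) * E.y₂ + (E.δ₁ s : B))
          + (E.σ₁₂ r : B) * ((E.σ₂₁ s : B) * E.y₁ + (E.σ₂₂ s : B) * E.y₂ + (E.δ₂ s : B))
          + (E.δ₁ r : B) * (s : B) := by rw [E.R2₁ s, E.R2₂ s]
      _ = _ := by push_cast; noncomm_ring
  obtain ⟨-, h1, h2, -, -, -⟩ := E.combo_eq (e1.symm.trans e2)
  exact ⟨h1, h2⟩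

lemma mul₂ (r s : A) :
    E.σ₂₁ (r * s) = E.σ₂₁ r * E.σ₁₁ s + E.σ₂₂ r * E.σ₂₁ s
    ∧ E.σ₂₂ (r * s) = E.σ₂₁ r * E.σ₁₂ s + E.σ₂₂ r * E.σ₂₂ s := by
  have e1 : E.y₂ * ((r * s : A) : B)
      = ((E.δ₂ (r*s) : A) : B) + (E.σ₂₁ (r*s) : A) * E.y₁ + (E.σ₂₂ (r*s) : A) * E.y₂
        + ((0:A) : B) * (E.y₁ * E.y₁) + ((0:A) : B) * (E.y₁ * E.y₂)
        + ((0:A) : B) * (E.y₂ * E.y₂) := by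
    rw [E.R2₂ (r*s)]; push_cast; noncomm_ring
  have e2 : E.y₂ * ((r * s : A) : B)
      = ((E.σ₂₁ r * E.δ₁ s + E.σ₂₂ r * E.δ₂ s + E.δ₂ r * s : A) : B)
        + ((E.σ₂₁ r * E.σ₁₁ s + E.σ₂₂ r * E.σ₂₁ s : A) : B) * E.y₁
        + ((E.σ₂₁ r * E.σ₁₂ s + E.σ₂₂ r * E.σ₂₂ s : A) : B) * E.y₂
        + ((0:A) : B) * (E.y₁ * E.y₁) + ((0:A) : B) * (E.y₁ * E.y₂)
        + ((0:A) : B) * (E.y₂ * E.y₂) := by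
    calc E.y₂ * ((r * s : A) : B) = E.y₂ * (r : B) * (s : B) := by
          push_cast; rw [mul_assoc]
      _ = ((E.σ₂₁ r : B) * E.y₁ + (E.σ₂₂ r : B) * E.y₂ + (E.δ₂ r : B)) * (s : B) := by
          rw [E.R2₂ r]
      _ = (E.σ₂₁ r : B) * (E.y₁ * (s : B)) + (E.σ₂₂ r : B) * (E.y₂ * (s : B))
          + (E.δ₂ r : B) * (s : B) := by noncomm_ring
      _ = (E.σ₂₁ r : B) * ((E.σ₁₁ s : B) * E.y₁ + (E.σ₁₂ s : B) * E.y₂ + (E.δ₁ s : B))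
          + (E.σ₂₂ r : B) * ((E.σ₂₁ s : B) * E.y₁ + (E.σ₂₂ s : B) * E.y₂ + (E.δ₂ s : B))
          + (E.δ₂ r : B) * (s : B) := by rw [E.R2₁ s, E.R2₂ s]
      _ = _ := by push_cast; noncomm_ring
  obtain ⟨-, h1, h2, -, -, -⟩ := E.combo_eq (e1.symm.trans e2)
  exact ⟨h1, h2⟩

lemma sigma_one :
    E.σ₁₁ 1 = 1 ∧ E.σ₁₂ 1 = 0 ∧ E.σ₂₁ 1 = 0 ∧ E.σ₂₂ 1 = 1 := by
  have e1 : E.y₁ * ((1 : A) : B)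
      = ((E.δ₁ 1 : A) : B) + (E.σ₁₁ 1 : A) * E.y₁ + (E.σ₁₂ 1 : A) * E.y₂
        + ((0:A) : B) * (E.y₁ * E.y₁) + ((0:A) : B) * (E.y₁ * E.y₂)
        + ((0:A) : B) * (E.y₂ * E.y₂) := by
    rw [E.R2₁ 1]; push_cast; noncomm_ring
  have e2 : E.y₁ * ((1 : A) : B)
      = ((0:A) : B) + ((1:A) : B) * E.y₁ + ((0:A) : B) * E.y₂
        + ((0:A) : B) * (E.y₁ * E.y₁) + ((0:A) : B) * (E.y₁ * E.y₂)
        + ((0:A) : B) * (E.y₂ * E.y₂) := by push_cast; noncomm_ring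
  obtain ⟨-, h1, h2, -, -, -⟩ := E.combo_eq (e1.symm.trans e2)
  have f1 : E.y₂ * ((1 : A) : B)
      = ((E.δ₂ 1 : A) : B) + (E.σ₂₁ 1 : A) * E.y₁ + (E.σ₂₂ 1 : A) * E.y₂
        + ((0:A) : B) * (E.y₁ * E.y₁) + ((0:A) : B) * (E.y₁ * E.y₂)
        + ((0:A) : B) * (E.y₂ * E.y₂) := by
    rw [E.R2₂ 1]; push_cast; noncomm_ring
  have f2 : E.y₂ * ((1 : A) : B)
      = ((0:A) : B) + ((0:A) : B) * E.y₁ + ((1:A) : B) * E.y₂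
        + ((0:A) : B) * (E.y₁ * E.y₁) + ((0:A) : B) * (E.y₁ * E.y₂)
        + ((0:A) : B) * (E.y₂ * E.y₂) := by push_cast; noncomm_ring
  obtain ⟨-, g1, g2, -, -, -⟩ := E.combo_eq (f1.symm.trans f2)
  exact ⟨h1, h2, g1, g2⟩


set_option maxHeartbeats 1600000 in
lemma relE (r : A) :
    E.σ₂₁ (E.σ₁₁ r)
      = E.p₁₂ • E.σ₁₁ (E.σ₂₁ r) + (E.p₁₂ * E.p₁₁) • E.σ₁₂ (E.σ₂₁ r)
        + E.p₁₁ • E.σ₁₁ (E.σ₁₁ r) + (E.p₁₁ * E.p₁₁) • E.σ₁₂ (E.σ₁₁ r)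
        - E.p₁₁ • E.σ₂₂ (E.σ₁₁ r)
    ∧ E.σ₂₁ (E.σ₁₂ r)
      = (E.p₁₂ * E.p₁₂) • E.σ₁₂ (E.σ₂₁ r) + E.p₁₂ • E.σ₁₁ (E.σ₂₂ r)
        + (E.p₁₁ * E.p₁₂) • E.σ₁₂ (E.σ₁₁ r) + E.p₁₁ • E.σ₁₁ (E.σ₁₂ r)
        - E.p₁₂ • E.σ₂₂ (E.σ₁₁ r)
    ∧ E.σ₂₂ (E.σ₁₂ r) = E.p₁₂ • E.σ₁₂ (E.σ₂₂ r) + E.p₁₁ • E.σ₁₂ (E.σ₁₂ r) := by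
  have eL : E.y₂ * (E.y₁ * (r : B))
      = ((E.σ₂₂ (E.σ₁₁ r) * E.τ₀ + E.δ₂ (E.δ₁ r) : A) : B)
        + ((E.σ₂₂ (E.σ₁₁ r) * E.τ₁ + E.δ₂ (E.σ₁₁ r) + E.σ₂₁ (E.δ₁ r) : A) : B) * E.y₁
        + ((E.σ₂₂ (E.σ₁₁ r) * E.τ₂ + E.δ₂ (E.σ₁₂ r) + E.σ₂₂ (E.δ₁ r) : A) : B) * E.y₂
        + ((E.σ₂₁ (E.σ₁₁ r) + E.p₁₁ • E.σ₂₂ (E.σ₁₁ r) : A) : B) * (E.y₁ * E.y₁)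
        + ((E.p₁₂ • E.σ₂₂ (E.σ₁₁ r) + E.σ₂₁ (E.σ₁₂ r) : A) : B) * (E.y₁ * E.y₂)
        + ((E.σ₂₂ (E.σ₁₂ r) : A) : B) * (E.y₂ * E.y₂) := by
    calc E.y₂ * (E.y₁ * (r : B))
        = E.y₂ * (((E.σ₁₁ r) : B) * E.y₁ + ((E.σ₁₂ r) : B) * E.y₂ + ((E.δ₁ r) : B)) := by rw [E.R2₁ r]
      _ = (E.y₂ * ((E.σ₁₁ r) : B)) * E.y₁ + (E.y₂ * ((E.σ₁₂ r) : B)) * E.y₂ + E.y₂ * ((E.δ₁ r) : B) := by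
          noncomm_ring
      _ = ((E.σ₂₁ (E.σ₁₁ r) : B) * E.y₁ + (E.σ₂₂ (E.σ₁₁ r) : B) * E.y₂ + (E.δ₂ (E.σ₁₁ r) : B)) * E.y₁
          + ((E.σ₂₁ (E.σ₁₂ r) : B) * E.y₁ + (E.σ₂₂ (E.σ₁₂ r) : B) * E.y₂ + (E.δ₂ (E.σ₁₂ r) : B)) * E.y₂
          + ((E.σ₂₁ (E.δ₁ r) : B) * E.y₁ + (E.σ₂₂ (E.δ₁ r) : B) * E.y₂ + (E.δ₂ (E.δ₁ r) : B)) := by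
          rw [E.R2₂ (E.σ₁₁ r), E.R2₂ (E.σ₁₂ r), E.R2₂ (E.δ₁ r)]
      _ = (E.σ₂₁ (E.σ₁₁ r) : B) * (E.y₁ * E.y₁) + (E.σ₂₂ (E.σ₁₁ r) : B) * (E.y₂ * E.y₁)
          + (E.δ₂ (E.σ₁₁ r) : B) * E.y₁
          + (E.σ₂₁ (E.σ₁₂ r) : B) * (E.y₁ * E.y₂) + (E.σ₂₂ (E.σ₁₂ r) : B) * (E.y₂ * E.y₂)
          + (E.δ₂ (E.σ₁₂ r) : B) * E.y₂
          + (E.σ₂₁ (E.δ₁ r) : B) * E.y₁ + (E.σ₂₂ (E.δ₁ r) : B) * E.y₂ + (E.δ₂ (E.δ₁ r) : B) := by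
          noncomm_ring
      _ = (E.σ₂₁ (E.σ₁₁ r) : B) * (E.y₁ * E.y₁)
          + (E.σ₂₂ (E.σ₁₁ r) : B) * (E.p₁₂ • (E.y₁ * E.y₂) + E.p₁₁ • (E.y₁ * E.y₁)
              + (E.τ₁ : B) * E.y₁ + (E.τ₂ : B) * E.y₂ + (E.τ₀ : B))
          + (E.δ₂ (E.σ₁₁ r) : B) * E.y₁
          + (E.σ₂₁ (E.σ₁₂ r) : B) * (E.y₁ * E.y₂) + (E.σ₂₂ (E.σ₁₂ r) : B) * (E.y₂ * E.y₂)
          + (E.δ₂ (E.σ₁₂ r) : B) * E.y₂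
          + (E.σ₂₁ (E.δ₁ r) : B) * E.y₁ + (E.σ₂₂ (E.δ₁ r) : B) * E.y₂ + (E.δ₂ (E.δ₁ r) : B) := by
          rw [E.R1]
      _ = _ := by
          push_cast
          simp only [mul_add, add_mul, smul_add, mul_smul_comm, smul_mul_assoc,
            smul_smul, mul_assoc]
          module
  have eR : E.y₂ * E.y₁ * (r : B)
      = ((E.p₁₂ • (E.σ₁₂ (E.σ₂₁ r) * E.τ₀) + E.p₁₂ • E.δ₁ (E.δ₂ r) + E.p₁₁ • (E.σ₁₂ (E.σ₁₁ r) * E.τ₀)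
            + E.p₁₁ • E.δ₁ (E.δ₁ r) + E.τ₁ * (E.δ₁ r) + E.τ₂ * (E.δ₂ r) + E.τ₀ * r : A) : B)
        + ((E.p₁₂ • (E.σ₁₂ (E.σ₂₁ r) * E.τ₁) + E.p₁₂ • E.δ₁ (E.σ₂₁ r) + E.p₁₂ • E.σ₁₁ (E.δ₂ r)
            + E.p₁₁ • (E.σ₁₂ (E.σ₁₁ r) * E.τ₁) + E.p₁₁ • E.δ₁ (E.σ₁₁ r) + E.p₁₁ • E.σ₁₁ (E.δ₁ r)
            + E.τ₁ * (E.σ₁₁ r) + E.τ₂ * (E.σ₂₁ r) : A) : B) * E.y₁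
        + ((E.p₁₂ • (E.σ₁₂ (E.σ₂₁ r) * E.τ₂) + E.p₁₂ • E.δ₁ (E.σ₂₂ r) + E.p₁₂ • E.σ₁₂ (E.δ₂ r)
            + E.p₁₁ • (E.σ₁₂ (E.σ₁₁ r) * E.τ₂) + E.p₁₁ • E.δ₁ (E.σ₁₂ r) + E.p₁₁ • E.σ₁₂ (E.δ₁ r)
            + E.τ₁ * (E.σ₁₂ r) + E.τ₂ * (E.σ₂₂ r) : A) : B) * E.y₂
        + ((E.p₁₂ • E.σ₁₁ (E.σ₂₁ r) + (E.p₁₂ * E.p₁₁) • E.σ₁₂ (E.σ₂₁ r) + E.p₁₁ • E.σ₁₁ (E.σ₁₁ r)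
            + (E.p₁₁ * E.p₁₁) • E.σ₁₂ (E.σ₁₁ r) : A) : B) * (E.y₁ * E.y₁)
        + (((E.p₁₂ * E.p₁₂) • E.σ₁₂ (E.σ₂₁ r) + E.p₁₂ • E.σ₁₁ (E.σ₂₂ r) + (E.p₁₁ * E.p₁₂) • E.σ₁₂ (E.σ₁₁ r)
            + E.p₁₁ • E.σ₁₁ (E.σ₁₂ r) : A) : B) * (E.y₁ * E.y₂)
        + ((E.p₁₂ • E.σ₁₂ (E.σ₂₂ r) + E.p₁₁ • E.σ₁₂ (E.σ₁₂ r) : A) : B) * (E.y₂ * E.y₂) := by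
    calc E.y₂ * E.y₁ * (r : B)
        = (E.p₁₂ • (E.y₁ * E.y₂) + E.p₁₁ • (E.y₁ * E.y₁)
            + (E.τ₁ : B) * E.y₁ + (E.τ₂ : B) * E.y₂ + (E.τ₀ : B)) * (r : B) := by
          rw [E.R1]
      _ = E.p₁₂ • (E.y₁ * (E.y₂ * (r : B))) + E.p₁₁ • (E.y₁ * (E.y₁ * (r : B)))
          + (E.τ₁ : B) * (E.y₁ * (r : B)) + (E.τ₂ : B) * (E.y₂ * (r : B))
          + (E.τ₀ : B) * (r : B) := by noncomm_ring
      _ = E.p₁₂ • (E.y₁ * (((E.σ₂₁ r) : B) * E.y₁ + ((E.σ₂₂ r) : B) * E.y₂ + ((E.δ₂ r) : B)))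
          + E.p₁₁ • (E.y₁ * (((E.σ₁₁ r) : B) * E.y₁ + ((E.σ₁₂ r) : B) * E.y₂ + ((E.δ₁ r) : B)))
          + (E.τ₁ : B) * (((E.σ₁₁ r) : B) * E.y₁ + ((E.σ₁₂ r) : B) * E.y₂ + ((E.δ₁ r) : B))
          + (E.τ₂ : B) * (((E.σ₂₁ r) : B) * E.y₁ + ((E.σ₂₂ r) : B) * E.y₂ + ((E.δ₂ r) : B))
          + (E.τ₀ : B) * (r : B) := by rw [E.R2₂ r, E.R2₁ r]
      _ = E.p₁₂ • ((E.y₁ * ((E.σ₂₁ r) : B)) * E.y₁ + (E.y₁ * ((E.σ₂₂ r) : B)) * E.y₂ + E.y₁ * ((E.δ₂ r) : B))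
          + E.p₁₁ • ((E.y₁ * ((E.σ₁₁ r) : B)) * E.y₁ + (E.y₁ * ((E.σ₁₂ r) : B)) * E.y₂ + E.y₁ * ((E.δ₁ r) : B))
          + (E.τ₁ : B) * (((E.σ₁₁ r) : B) * E.y₁ + ((E.σ₁₂ r) : B) * E.y₂ + ((E.δ₁ r) : B))
          + (E.τ₂ : B) * (((E.σ₂₁ r) : B) * E.y₁ + ((E.σ₂₂ r) : B) * E.y₂ + ((E.δ₂ r) : B))
          + (E.τ₀ : B) * (r : B) := by noncomm_ring [smul_add]
      _ = E.p₁₂ • (((E.σ₁₁ (E.σ₂₁ r) : B) * E.y₁ + (E.σ₁₂ (E.σ₂₁ r) : B) * E.y₂ + (E.δ₁ (E.σ₂₁ r) : B)) * E.y₁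
              + ((E.σ₁₁ (E.σ₂₂ r) : B) * E.y₁ + (E.σ₁₂ (E.σ₂₂ r) : B) * E.y₂ + (E.δ₁ (E.σ₂₂ r) : B)) * E.y₂
              + ((E.σ₁₁ (E.δ₂ r) : B) * E.y₁ + (E.σ₁₂ (E.δ₂ r) : B) * E.y₂ + (E.δ₁ (E.δ₂ r) : B)))
          + E.p₁₁ • (((E.σ₁₁ (E.σ₁₁ r) : B) * E.y₁ + (E.σ₁₂ (E.σ₁₁ r) : B) * E.y₂ + (E.δ₁ (E.σ₁₁ r) : B)) * E.y₁
              + ((E.σ₁₁ (E.σ₁₂ r) : B) * E.y₁ + (E.σ₁₂ (E.σ₁₂ r) : B) * E.y₂ + (E.δ₁ (E.σ₁₂ r) : B)) * E.y₂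
              + ((E.σ₁₁ (E.δ₁ r) : B) * E.y₁ + (E.σ₁₂ (E.δ₁ r) : B) * E.y₂ + (E.δ₁ (E.δ₁ r) : B)))
          + (E.τ₁ : B) * (((E.σ₁₁ r) : B) * E.y₁ + ((E.σ₁₂ r) : B) * E.y₂ + ((E.δ₁ r) : B))
          + (E.τ₂ : B) * (((E.σ₂₁ r) : B) * E.y₁ + ((E.σ₂₂ r) : B) * E.y₂ + ((E.δ₂ r) : B))
          + (E.τ₀ : B) * (r : B) := by
          rw [E.R2₁ (E.σ₂₁ r), E.R2₁ (E.σ₂₂ r), E.R2₁ (E.δ₂ r), E.R2₁ (E.σ₁₁ r), E.R2₁ (E.σ₁₂ r), E.R2₁ (E.δ₁ r)]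
      _ = E.p₁₂ • ((E.σ₁₁ (E.σ₂₁ r) : B) * (E.y₁ * E.y₁) + (E.σ₁₂ (E.σ₂₁ r) : B) * (E.y₂ * E.y₁)
              + (E.δ₁ (E.σ₂₁ r) : B) * E.y₁ + (E.σ₁₁ (E.σ₂₂ r) : B) * (E.y₁ * E.y₂)
              + (E.σ₁₂ (E.σ₂₂ r) : B) * (E.y₂ * E.y₂) + (E.δ₁ (E.σ₂₂ r) : B) * E.y₂
              + (E.σ₁₁ (E.δ₂ r) : B) * E.y₁ + (E.σ₁₂ (E.δ₂ r) : B) * E.y₂ + (E.δ₁ (E.δ₂ r) : B))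
          + E.p₁₁ • ((E.σ₁₁ (E.σ₁₁ r) : B) * (E.y₁ * E.y₁) + (E.σ₁₂ (E.σ₁₁ r) : B) * (E.y₂ * E.y₁)
              + (E.δ₁ (E.σ₁₁ r) : B) * E.y₁ + (E.σ₁₁ (E.σ₁₂ r) : B) * (E.y₁ * E.y₂)
              + (E.σ₁₂ (E.σ₁₂ r) : B) * (E.y₂ * E.y₂) + (E.δ₁ (E.σ₁₂ r) : B) * E.y₂
              + (E.σ₁₁ (E.δ₁ r) : B) * E.y₁ + (E.σ₁₂ (E.δ₁ r) : B) * E.y₂ + (E.δ₁ (E.δ₁ r) : B))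
          + (E.τ₁ : B) * (((E.σ₁₁ r) : B) * E.y₁ + ((E.σ₁₂ r) : B) * E.y₂ + ((E.δ₁ r) : B))
          + (E.τ₂ : B) * (((E.σ₂₁ r) : B) * E.y₁ + ((E.σ₂₂ r) : B) * E.y₂ + ((E.δ₂ r) : B))
          + (E.τ₀ : B) * (r : B) := by noncomm_ring [smul_add]
      _ = _ := by
          rw [E.R1]
          push_cast
          simp only [mul_add, add_mul, smul_add, mul_smul_comm, smul_mul_assoc,
            smul_smul, mul_assoc]
          module
  have hassoc : E.y₂ * (E.y₁ * (r : B)) = E.y₂ * E.y₁ * (r : B) := (mul_assoc _ _ _).symm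
  obtain ⟨-, -, -, g3, g4, g5⟩ := E.combo_eq ((eL.symm.trans (hassoc.trans eR)))
  refine ⟨eq_sub_of_add_eq g3, eq_sub_of_add_eq ?_, g5⟩
  rw [add_comm] at g4
  exact g4

end RightDoubleExtension


/-- The determinant of `σ`: `det σ(r) = −p₁₁σ₁₂(σ₁₁(r)) + σ₂₂(σ₁₁(r)) − p₁₂σ₁₂(σ₂₁(r))`. -/
def RightDoubleExtension.detσ {k : Type*} [Field k] {B : Type*} [Ring B] [Algebra k B]
    {A : Subalgebra k B} (E : RightDoubleExtension k A) : A → A :=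
  fun r => -(E.p₁₁ • E.σ₁₂ (E.σ₁₁ r)) + E.σ₂₂ (E.σ₁₁ r) - E.p₁₂ • E.σ₁₂ (E.σ₂₁ r)

/-- For a right double extension, `det σ` is a `k`-algebra endomorphism of `A`. -/
theorem detσ_algebra_endomorphism
    {k : Type*} [Field k] {B : Type*} [Ring B] [Algebra k B]
    {A : Subalgebra k B} (E : RightDoubleExtension k A) :
    E.detσ 1 = 1 ∧ ∀ r s : A, E.detσ (r * s) = E.detσ r * E.detσ s := by
  obtain ⟨h11, h12, h21, h22⟩ := E.sigma_one
  constructor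
  · simp [RightDoubleExtension.detσ, h11, h12, h21, h22]
  · intro r s
    unfold RightDoubleExtension.detσ
    obtain ⟨e3, e2, e1⟩ := E.relE r
    rw [(E.mul₁ r s).1, (E.mul₂ r s).1, map_add, map_add, map_add,
      (E.mul₁ (E.σ₁₁ r) (E.σ₁₁ s)).2, (E.mul₁ (E.σ₁₂ r) (E.σ₂₁ s)).2,
      (E.mul₂ (E.σ₁₁ r) (E.σ₁₁ s)).2, (E.mul₂ (E.σ₁₂ r) (E.σ₂₁ s)).2,
      (E.mul₁ (E.σ₂₁ r) (E.σ₁₁ s)).2, (E.mul₁ (E.σ₂₂ r) (E.σ₂₁ s)).2,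
      e3, e2, e1]
    set_option maxHeartbeats 1600000 in
    (simp only [mul_add, add_mul, sub_mul, mul_sub, smul_add, smul_sub, smul_neg,
      neg_mul, mul_neg, smul_mul_assoc, mul_smul_comm, smul_smul, neg_neg];
     module)
end

section
/- Let B be a right double extension of A with data (P, σ, δ, τ) such that p₁₂ ≠ 0 and det σ is bijective. Then σ has a right inverse: there exists a k-algebra homomorphism φ = (φᵢⱼ) : A → M₂(A) such that for all r ∈ A and all i, j ∈ {1,2}, σ₁ⱼ(φ₁ᵢ(r)) + σ₂ⱼ(φ₂ᵢ(r)) = r if i = j and = 0 if i ≠ j. -/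
namespace RightDoubleExtension

variable {k : Type*} [Field k] {B : Type*} [Ring B] [Algebra k B]
  {A : Subalgebra k B} (E : RightDoubleExtension k A)

/-- explicit finsupp on the six low monomials -/
noncomputable def rep (t0 t1 t2 t3 t4 t5 : A) : ℕ × ℕ →₀ A :=
  Finsupp.single (0,0) t0 + Finsupp.single (1,0) t1 + Finsupp.single (0,1) t2 +
  Finsupp.single (2,0) t3 + Finsupp.single (1,1) t4 + Finsupp.single (0,2) t5

lemma rep_sum (t0 t1 t2 t3 t4 t5 : A) :
    (rep (A := A) t0 t1 t2 t3 t4 t5).sum (fun n a => (a : B) * (E.y₁ ^ n.1 * E.y₂ ^ n.2))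
      = (t0 : B) + (t1 : B) * E.y₁ + (t2 : B) * E.y₂ + (t3 : B) * (E.y₁ * E.y₁)
        + (t4 : B) * (E.y₁ * E.y₂) + (t5 : B) * (E.y₂ * E.y₂) := by
  have h0 : ∀ n : ℕ × ℕ, ((0 : A) : B) * (E.y₁ ^ n.1 * E.y₂ ^ n.2) = 0 := by
    intro n; push_cast; simp
  have hadd : ∀ (n : ℕ × ℕ) (a b : A),
      ((a + b : A) : B) * (E.y₁ ^ n.1 * E.y₂ ^ n.2)
        = (a : B) * (E.y₁ ^ n.1 * E.y₂ ^ n.2) + (b : B) * (E.y₁ ^ n.1 * E.y₂ ^ n.2) := by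
    intro n a b; push_cast; rw [add_mul]
  unfold rep
  rw [Finsupp.sum_add_index' h0 hadd, Finsupp.sum_add_index' h0 hadd,
      Finsupp.sum_add_index' h0 hadd, Finsupp.sum_add_index' h0 hadd,
      Finsupp.sum_add_index' h0 hadd]
  rw [Finsupp.sum_single_index (h0 _), Finsupp.sum_single_index (h0 _),
      Finsupp.sum_single_index (h0 _), Finsupp.sum_single_index (h0 _),
      Finsupp.sum_single_index (h0 _), Finsupp.sum_single_index (h0 _)]
  simp [pow_two]

lemma coeffs_eq {t0 t1 t2 t3 t4 t5 s0 s1 s2 s3 s4 s5 : A}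
    (h : (t0 : B) + (t1 : B) * E.y₁ + (t2 : B) * E.y₂ + (t3 : B) * (E.y₁ * E.y₁)
        + (t4 : B) * (E.y₁ * E.y₂) + (t5 : B) * (E.y₂ * E.y₂)
      = (s0 : B) + (s1 : B) * E.y₁ + (s2 : B) * E.y₂ + (s3 : B) * (E.y₁ * E.y₁)
        + (s4 : B) * (E.y₁ * E.y₂) + (s5 : B) * (E.y₂ * E.y₂)) :
    t0 = s0 ∧ t1 = s1 ∧ t2 = s2 ∧ t3 = s3 ∧ t4 = s4 ∧ t5 = s5 := by
  obtain ⟨f, -, huniq⟩ := E.basis ((t0 : B) + (t1 : B) * E.y₁ + (t2 : B) * E.y₂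
    + (t3 : B) * (E.y₁ * E.y₁) + (t4 : B) * (E.y₁ * E.y₂) + (t5 : B) * (E.y₂ * E.y₂))
  have h1 := huniq (rep (A := A) t0 t1 t2 t3 t4 t5) (E.rep_sum t0 t1 t2 t3 t4 t5).symm
  have h2 := huniq (rep (A := A) s0 s1 s2 s3 s4 s5) (h.trans (E.rep_sum s0 s1 s2 s3 s4 s5).symm)
  have hrs : rep (A := A) t0 t1 t2 t3 t4 t5 = rep (A := A) s0 s1 s2 s3 s4 s5 := h1.trans h2.symm
  have key : ∀ n : ℕ × ℕ, (rep (A := A) t0 t1 t2 t3 t4 t5) n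
      = (rep (A := A) s0 s1 s2 s3 s4 s5) n := fun n => by rw [hrs]
  refine ⟨?_, ?_, ?_, ?_, ?_, ?_⟩
  · simpa [rep, Finsupp.single_apply, Prod.ext_iff] using key (0,0)
  · simpa [rep, Finsupp.single_apply, Prod.ext_iff] using key (1,0)
  · simpa [rep, Finsupp.single_apply, Prod.ext_iff] using key (0,1)
  · simpa [rep, Finsupp.single_apply, Prod.ext_iff] using key (2,0)
  · simpa [rep, Finsupp.single_apply, Prod.ext_iff] using key (1,1)
  · simpa [rep, Finsupp.single_apply, Prod.ext_iff] using key (0,2)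

lemma R1' : E.y₂ * E.y₁
    = ((algebraMap k A E.p₁₂ : A) : B) * (E.y₁ * E.y₂)
      + ((algebraMap k A E.p₁₁ : A) : B) * (E.y₁ * E.y₁)
      + (E.τ₁ : B) * E.y₁ + (E.τ₂ : B) * E.y₂ + (E.τ₀ : B) := by
  rw [E.R1]
  simp [Algebra.smul_def]

/-- expansion of `y₂ (y₁ r)`. -/
lemma exp21 (r : A) :
    E.y₂ * (E.y₁ * (r : B)) =
      ((E.δ₂ (E.δ₁ r) + E.σ₂₂ (E.σ₁₁ r) * E.τ₀ : A) : B)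
      + ((E.δ₂ (E.σ₁₁ r) + E.σ₂₂ (E.σ₁₁ r) * E.τ₁ + E.σ₂₁ (E.δ₁ r) : A) : B) * E.y₁
      + ((E.σ₂₂ (E.σ₁₁ r) * E.τ₂ + E.δ₂ (E.σ₁₂ r) + E.σ₂₂ (E.δ₁ r) : A) : B) * E.y₂
      + ((E.σ₂₁ (E.σ₁₁ r) + E.σ₂₂ (E.σ₁₁ r) * algebraMap k A E.p₁₁ : A) : B) * (E.y₁ * E.y₁)
      + ((E.σ₂₂ (E.σ₁₁ r) * algebraMap k A E.p₁₂ + E.σ₂₁ (E.σ₁₂ r) : A) : B) * (E.y₁ * E.y₂)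
      + ((E.σ₂₂ (E.σ₁₂ r) : A) : B) * (E.y₂ * E.y₂) := by
  calc E.y₂ * (E.y₁ * (r : B))
      = E.y₂ * ((E.σ₁₁ r : B) * E.y₁ + (E.σ₁₂ r : B) * E.y₂ + (E.δ₁ r : B)) := by rw [E.R2₁]
    _ = (E.y₂ * (E.σ₁₁ r : B)) * E.y₁ + (E.y₂ * (E.σ₁₂ r : B)) * E.y₂
        + E.y₂ * (E.δ₁ r : B) := by noncomm_ring
    _ = ((E.σ₂₁ (E.σ₁₁ r) : B) * E.y₁ + (E.σ₂₂ (E.σ₁₁ r) : B) * E.y₂ + (E.δ₂ (E.σ₁₁ r) : B)) * E.y₁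
        + ((E.σ₂₁ (E.σ₁₂ r) : B) * E.y₁ + (E.σ₂₂ (E.σ₁₂ r) : B) * E.y₂ + (E.δ₂ (E.σ₁₂ r) : B)) * E.y₂
        + ((E.σ₂₁ (E.δ₁ r) : B) * E.y₁ + (E.σ₂₂ (E.δ₁ r) : B) * E.y₂ + (E.δ₂ (E.δ₁ r) : B)) := by
        rw [E.R2₂, E.R2₂, E.R2₂]
    _ = (E.σ₂₂ (E.σ₁₁ r) : B) * (E.y₂ * E.y₁)
        + ((E.σ₂₁ (E.σ₁₁ r) : B) * (E.y₁ * E.y₁)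
          + (E.δ₂ (E.σ₁₁ r) : B) * E.y₁
          + (E.σ₂₁ (E.σ₁₂ r) : B) * (E.y₁ * E.y₂)
          + (E.σ₂₂ (E.σ₁₂ r) : B) * (E.y₂ * E.y₂)
          + (E.δ₂ (E.σ₁₂ r) : B) * E.y₂
          + (E.σ₂₁ (E.δ₁ r) : B) * E.y₁
          + (E.σ₂₂ (E.δ₁ r) : B) * E.y₂
          + (E.δ₂ (E.δ₁ r) : B)) := by noncomm_ring
    _ = _ := by rw [E.R1']; push_cast; noncomm_ring

/-- expansion of `y₁ (y₁ r)`. -/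
lemma exp11 (r : A) :
    E.y₁ * (E.y₁ * (r : B)) =
      ((E.δ₁ (E.δ₁ r) + E.σ₁₂ (E.σ₁₁ r) * E.τ₀ : A) : B)
      + ((E.δ₁ (E.σ₁₁ r) + E.σ₁₂ (E.σ₁₁ r) * E.τ₁ + E.σ₁₁ (E.δ₁ r) : A) : B) * E.y₁
      + ((E.σ₁₂ (E.σ₁₁ r) * E.τ₂ + E.δ₁ (E.σ₁₂ r) + E.σ₁₂ (E.δ₁ r) : A) : B) * E.y₂
      + ((E.σ₁₁ (E.σ₁₁ r) + E.σ₁₂ (E.σ₁₁ r) * algebraMap k A E.p₁₁ : A) : B) * (E.y₁ * E.y₁)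
      + ((E.σ₁₂ (E.σ₁₁ r) * algebraMap k A E.p₁₂ + E.σ₁₁ (E.σ₁₂ r) : A) : B) * (E.y₁ * E.y₂)
      + ((E.σ₁₂ (E.σ₁₂ r) : A) : B) * (E.y₂ * E.y₂) := by
  calc E.y₁ * (E.y₁ * (r : B))
      = E.y₁ * ((E.σ₁₁ r : B) * E.y₁ + (E.σ₁₂ r : B) * E.y₂ + (E.δ₁ r : B)) := by rw [E.R2₁]
    _ = (E.y₁ * (E.σ₁₁ r : B)) * E.y₁ + (E.y₁ * (E.σ₁₂ r : B)) * E.y₂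
        + E.y₁ * (E.δ₁ r : B) := by noncomm_ring
    _ = ((E.σ₁₁ (E.σ₁₁ r) : B) * E.y₁ + (E.σ₁₂ (E.σ₁₁ r) : B) * E.y₂ + (E.δ₁ (E.σ₁₁ r) : B)) * E.y₁
        + ((E.σ₁₁ (E.σ₁₂ r) : B) * E.y₁ + (E.σ₁₂ (E.σ₁₂ r) : B) * E.y₂ + (E.δ₁ (E.σ₁₂ r) : B)) * E.y₂
        + ((E.σ₁₁ (E.δ₁ r) : B) * E.y₁ + (E.σ₁₂ (E.δ₁ r) : B) * E.y₂ + (E.δ₁ (E.δ₁ r) : B)) := by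
        rw [E.R2₁, E.R2₁, E.R2₁]
    _ = (E.σ₁₂ (E.σ₁₁ r) : B) * (E.y₂ * E.y₁)
        + ((E.σ₁₁ (E.σ₁₁ r) : B) * (E.y₁ * E.y₁)
          + (E.δ₁ (E.σ₁₁ r) : B) * E.y₁
          + (E.σ₁₁ (E.σ₁₂ r) : B) * (E.y₁ * E.y₂)
          + (E.σ₁₂ (E.σ₁₂ r) : B) * (E.y₂ * E.y₂)
          + (E.δ₁ (E.σ₁₂ r) : B) * E.y₂
          + (E.σ₁₁ (E.δ₁ r) : B) * E.y₁
          + (E.σ₁₂ (E.δ₁ r) : B) * E.y₂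
          + (E.δ₁ (E.δ₁ r) : B)) := by noncomm_ring
    _ = _ := by rw [E.R1']; push_cast; noncomm_ring

/-- expansion of `y₁ (y₂ r)`. -/
lemma exp12 (r : A) :
    E.y₁ * (E.y₂ * (r : B)) =
      ((E.δ₁ (E.δ₂ r) + E.σ₁₂ (E.σ₂₁ r) * E.τ₀ : A) : B)
      + ((E.δ₁ (E.σ₂₁ r) + E.σ₁₂ (E.σ₂₁ r) * E.τ₁ + E.σ₁₁ (E.δ₂ r) : A) : B) * E.y₁
      + ((E.σ₁₂ (E.σ₂₁ r) * E.τ₂ + E.δ₁ (E.σ₂₂ r) + E.σ₁₂ (E.δ₂ r) : A) : B) * E.y₂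
      + ((E.σ₁₁ (E.σ₂₁ r) + E.σ₁₂ (E.σ₂₁ r) * algebraMap k A E.p₁₁ : A) : B) * (E.y₁ * E.y₁)
      + ((E.σ₁₂ (E.σ₂₁ r) * algebraMap k A E.p₁₂ + E.σ₁₁ (E.σ₂₂ r) : A) : B) * (E.y₁ * E.y₂)
      + ((E.σ₁₂ (E.σ₂₂ r) : A) : B) * (E.y₂ * E.y₂) := by
  calc E.y₁ * (E.y₂ * (r : B))
      = E.y₁ * ((E.σ₂₁ r : B) * E.y₁ + (E.σ₂₂ r : B) * E.y₂ + (E.δ₂ r : B)) := by rw [E.R2₂]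
    _ = (E.y₁ * (E.σ₂₁ r : B)) * E.y₁ + (E.y₁ * (E.σ₂₂ r : B)) * E.y₂
        + E.y₁ * (E.δ₂ r : B) := by noncomm_ring
    _ = ((E.σ₁₁ (E.σ₂₁ r) : B) * E.y₁ + (E.σ₁₂ (E.σ₂₁ r) : B) * E.y₂ + (E.δ₁ (E.σ₂₁ r) : B)) * E.y₁
        + ((E.σ₁₁ (E.σ₂₂ r) : B) * E.y₁ + (E.σ₁₂ (E.σ₂₂ r) : B) * E.y₂ + (E.δ₁ (E.σ₂₂ r) : B)) * E.y₂
        + ((E.σ₁₁ (E.δ₂ r) : B) * E.y₁ + (E.σ₁₂ (E.δ₂ r) : B) * E.y₂ + (E.δ₁ (E.δ₂ r) : B)) := by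
        rw [E.R2₁, E.R2₁, E.R2₁]
    _ = (E.σ₁₂ (E.σ₂₁ r) : B) * (E.y₂ * E.y₁)
        + ((E.σ₁₁ (E.σ₂₁ r) : B) * (E.y₁ * E.y₁)
          + (E.δ₁ (E.σ₂₁ r) : B) * E.y₁
          + (E.σ₁₁ (E.σ₂₂ r) : B) * (E.y₁ * E.y₂)
          + (E.σ₁₂ (E.σ₂₂ r) : B) * (E.y₂ * E.y₂)
          + (E.δ₁ (E.σ₂₂ r) : B) * E.y₂
          + (E.σ₁₁ (E.δ₂ r) : B) * E.y₁
          + (E.σ₁₂ (E.δ₂ r) : B) * E.y₂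
          + (E.δ₁ (E.δ₂ r) : B)) := by noncomm_ring
    _ = _ := by rw [E.R1']; push_cast; noncomm_ring

/-- expansion of `(y₂ y₁) r` via R1. -/
lemma expR (r : A) :
    (E.y₂ * E.y₁) * (r : B) =
      ((algebraMap k A E.p₁₂ * (E.δ₁ (E.δ₂ r) + E.σ₁₂ (E.σ₂₁ r) * E.τ₀)
        + algebraMap k A E.p₁₁ * (E.δ₁ (E.δ₁ r) + E.σ₁₂ (E.σ₁₁ r) * E.τ₀)
        + E.τ₁ * E.δ₁ r + E.τ₂ * E.δ₂ r + E.τ₀ * r : A) : B)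
      + ((algebraMap k A E.p₁₂ * (E.δ₁ (E.σ₂₁ r) + E.σ₁₂ (E.σ₂₁ r) * E.τ₁ + E.σ₁₁ (E.δ₂ r))
        + algebraMap k A E.p₁₁ * (E.δ₁ (E.σ₁₁ r) + E.σ₁₂ (E.σ₁₁ r) * E.τ₁ + E.σ₁₁ (E.δ₁ r))
        + E.τ₁ * E.σ₁₁ r + E.τ₂ * E.σ₂₁ r : A) : B) * E.y₁
      + ((algebraMap k A E.p₁₂ * (E.σ₁₂ (E.σ₂₁ r) * E.τ₂ + E.δ₁ (E.σ₂₂ r) + E.σ₁₂ (E.δ₂ r))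
        + algebraMap k A E.p₁₁ * (E.σ₁₂ (E.σ₁₁ r) * E.τ₂ + E.δ₁ (E.σ₁₂ r) + E.σ₁₂ (E.δ₁ r))
        + E.τ₁ * E.σ₁₂ r + E.τ₂ * E.σ₂₂ r : A) : B) * E.y₂
      + ((algebraMap k A E.p₁₂ * (E.σ₁₁ (E.σ₂₁ r) + E.σ₁₂ (E.σ₂₁ r) * algebraMap k A E.p₁₁)
        + algebraMap k A E.p₁₁ * (E.σ₁₁ (E.σ₁₁ r) + E.σ₁₂ (E.σ₁₁ r) * algebraMap k A E.p₁₁)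
          : A) : B) * (E.y₁ * E.y₁)
      + ((algebraMap k A E.p₁₂ * (E.σ₁₂ (E.σ₂₁ r) * algebraMap k A E.p₁₂ + E.σ₁₁ (E.σ₂₂ r))
        + algebraMap k A E.p₁₁ * (E.σ₁₂ (E.σ₁₁ r) * algebraMap k A E.p₁₂ + E.σ₁₁ (E.σ₁₂ r))
          : A) : B) * (E.y₁ * E.y₂)
      + ((algebraMap k A E.p₁₂ * E.σ₁₂ (E.σ₂₂ r)
        + algebraMap k A E.p₁₁ * E.σ₁₂ (E.σ₁₂ r) : A) : B) * (E.y₂ * E.y₂) := by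
  calc (E.y₂ * E.y₁) * (r : B)
      = (((algebraMap k A E.p₁₂ : A) : B) * (E.y₁ * E.y₂)
          + ((algebraMap k A E.p₁₁ : A) : B) * (E.y₁ * E.y₁)
          + (E.τ₁ : B) * E.y₁ + (E.τ₂ : B) * E.y₂ + (E.τ₀ : B)) * (r : B) := by rw [E.R1']
    _ = ((algebraMap k A E.p₁₂ : A) : B) * (E.y₁ * (E.y₂ * (r : B)))
        + ((algebraMap k A E.p₁₁ : A) : B) * (E.y₁ * (E.y₁ * (r : B)))
        + (E.τ₁ : B) * (E.y₁ * (r : B)) + (E.τ₂ : B) * (E.y₂ * (r : B))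
        + (E.τ₀ : B) * (r : B) := by noncomm_ring
    _ = _ := by rw [E.exp12, E.exp11, E.R2₁, E.R2₂]; push_cast; noncomm_ring

end RightDoubleExtension

namespace RightDoubleExtension

variable {k : Type*} [Field k] {B : Type*} [Ring B] [Algebra k B]
  {A : Subalgebra k B} (E : RightDoubleExtension k A)

lemma quad (r : A) :
    (E.σ₂₁ (E.σ₁₁ r) + E.σ₂₂ (E.σ₁₁ r) * algebraMap k A E.p₁₁
      = algebraMap k A E.p₁₂ * (E.σ₁₁ (E.σ₂₁ r) + E.σ₁₂ (E.σ₂₁ r) * algebraMap k A E.p₁₁)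
        + algebraMap k A E.p₁₁ * (E.σ₁₁ (E.σ₁₁ r) + E.σ₁₂ (E.σ₁₁ r) * algebraMap k A E.p₁₁))
    ∧ (E.σ₂₂ (E.σ₁₁ r) * algebraMap k A E.p₁₂ + E.σ₂₁ (E.σ₁₂ r)
      = algebraMap k A E.p₁₂ * (E.σ₁₂ (E.σ₂₁ r) * algebraMap k A E.p₁₂ + E.σ₁₁ (E.σ₂₂ r))
        + algebraMap k A E.p₁₁ * (E.σ₁₂ (E.σ₁₁ r) * algebraMap k A E.p₁₂ + E.σ₁₁ (E.σ₁₂ r)))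
    ∧ (E.σ₂₂ (E.σ₁₂ r)
      = algebraMap k A E.p₁₂ * E.σ₁₂ (E.σ₂₂ r) + algebraMap k A E.p₁₁ * E.σ₁₂ (E.σ₁₂ r)) := by
  have key := (E.exp21 r).symm.trans
    (((mul_assoc E.y₂ E.y₁ (r : B)).symm).trans (E.expR r))
  obtain ⟨-, -, -, h3, h4, h5⟩ := E.coeffs_eq key
  exact ⟨h3, h4, h5⟩

lemma hcr (p : k) (x : A) : x * algebraMap k A p = p • x := by
  rw [← Algebra.commutes, ← Algebra.smul_def]

/-- relation (1). -/
lemma rel1 (r : A) : E.σ₂₂ (E.σ₁₂ r)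
    = E.p₁₂ • E.σ₁₂ (E.σ₂₂ r) + E.p₁₁ • E.σ₁₂ (E.σ₁₂ r) := by
  have h := (E.quad r).2.2
  simpa only [← Algebra.smul_def] using h

/-- relation (2). -/
lemma rel2 (r : A) : E.p₁₂ • E.σ₂₂ (E.σ₁₁ r) + E.σ₂₁ (E.σ₁₂ r)
    = E.p₁₂ • (E.p₁₂ • E.σ₁₂ (E.σ₂₁ r) + E.σ₁₁ (E.σ₂₂ r))
      + E.p₁₁ • (E.p₁₂ • E.σ₁₂ (E.σ₁₁ r) + E.σ₁₁ (E.σ₁₂ r)) := by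
  have h := (E.quad r).2.1
  simpa only [hcr, ← Algebra.smul_def] using h

/-- relation (3). -/
lemma rel3 (r : A) : E.σ₂₁ (E.σ₁₁ r) + E.p₁₁ • E.σ₂₂ (E.σ₁₁ r)
    = E.p₁₂ • (E.σ₁₁ (E.σ₂₁ r) + E.p₁₁ • E.σ₁₂ (E.σ₂₁ r))
      + E.p₁₁ • (E.σ₁₁ (E.σ₁₁ r) + E.p₁₁ • E.σ₁₂ (E.σ₁₁ r)) := by
  have h := (E.quad r).1
  simpa only [hcr, ← Algebra.smul_def] using h

lemma sigma_mul (i : Fin 2) (r s : A) :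
    ((if i = 0 then E.σ₁₁ else E.σ₂₁) (r * s)
        = (if i = 0 then E.σ₁₁ else E.σ₂₁) r * E.σ₁₁ s
          + (if i = 0 then E.σ₁₂ else E.σ₂₂) r * E.σ₂₁ s)
    ∧ ((if i = 0 then E.σ₁₂ else E.σ₂₂) (r * s)
        = (if i = 0 then E.σ₁₁ else E.σ₂₁) r * E.σ₁₂ s
          + (if i = 0 then E.σ₁₂ else E.σ₂₂) r * E.σ₂₂ s) := by
  fin_cases i <;> simp only [reduceIte]
  · have key : ((E.σ₁₁ r * E.δ₁ s + E.σ₁₂ r * E.δ₂ s + E.δ₁ r * s : A) : B)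
        + ((E.σ₁₁ r * E.σ₁₁ s + E.σ₁₂ r * E.σ₂₁ s : A) : B) * E.y₁
        + ((E.σ₁₁ r * E.σ₁₂ s + E.σ₁₂ r * E.σ₂₂ s : A) : B) * E.y₂
        + ((0 : A) : B) * (E.y₁ * E.y₁) + ((0 : A) : B) * (E.y₁ * E.y₂)
        + ((0 : A) : B) * (E.y₂ * E.y₂)
        = ((E.δ₁ (r * s) : A) : B) + (E.σ₁₁ (r * s) : B) * E.y₁ + (E.σ₁₂ (r * s) : B) * E.y₂
        + ((0 : A) : B) * (E.y₁ * E.y₁) + ((0 : A) : B) * (E.y₁ * E.y₂)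
        + ((0 : A) : B) * (E.y₂ * E.y₂) := by
      calc _ = (E.σ₁₁ r : B) * ((E.σ₁₁ s : B) * E.y₁ + (E.σ₁₂ s : B) * E.y₂ + (E.δ₁ s : B))
              + (E.σ₁₂ r : B) * ((E.σ₂₁ s : B) * E.y₁ + (E.σ₂₂ s : B) * E.y₂ + (E.δ₂ s : B))
              + (E.δ₁ r : B) * (s : B) := by push_cast; noncomm_ring
        _ = (E.σ₁₁ r : B) * (E.y₁ * (s : B)) + (E.σ₁₂ r : B) * (E.y₂ * (s : B))
              + (E.δ₁ r : B) * (s : B) := by rw [E.R2₁, E.R2₂]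
        _ = ((E.σ₁₁ r : B) * E.y₁ + (E.σ₁₂ r : B) * E.y₂ + (E.δ₁ r : B)) * (s : B) := by
              noncomm_ring
        _ = (E.y₁ * (r : B)) * (s : B) := by rw [E.R2₁]
        _ = E.y₁ * ((r * s : A) : B) := by push_cast; rw [mul_assoc]
        _ = _ := by rw [E.R2₁]; push_cast; noncomm_ring
    obtain ⟨-, e1, e2, -⟩ := E.coeffs_eq key
    exact ⟨e1.symm, e2.symm⟩
  · have key : ((E.σ₂₁ r * E.δ₁ s + E.σ₂₂ r * E.δ₂ s + E.δ₂ r * s : A) : B)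
        + ((E.σ₂₁ r * E.σ₁₁ s + E.σ₂₂ r * E.σ₂₁ s : A) : B) * E.y₁
        + ((E.σ₂₁ r * E.σ₁₂ s + E.σ₂₂ r * E.σ₂₂ s : A) : B) * E.y₂
        + ((0 : A) : B) * (E.y₁ * E.y₁) + ((0 : A) : B) * (E.y₁ * E.y₂)
        + ((0 : A) : B) * (E.y₂ * E.y₂)
        = ((E.δ₂ (r * s) : A) : B) + (E.σ₂₁ (r * s) : B) * E.y₁ + (E.σ₂₂ (r * s) : B) * E.y₂
        + ((0 : A) : B) * (E.y₁ * E.y₁) + ((0 : A) : B) * (E.y₁ * E.y₂)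
        + ((0 : A) : B) * (E.y₂ * E.y₂) := by
      calc _ = (E.σ₂₁ r : B) * ((E.σ₁₁ s : B) * E.y₁ + (E.σ₁₂ s : B) * E.y₂ + (E.δ₁ s : B))
              + (E.σ₂₂ r : B) * ((E.σ₂₁ s : B) * E.y₁ + (E.σ₂₂ s : B) * E.y₂ + (E.δ₂ s : B))
              + (E.δ₂ r : B) * (s : B) := by push_cast; noncomm_ring
        _ = (E.σ₂₁ r : B) * (E.y₁ * (s : B)) + (E.σ₂₂ r : B) * (E.y₂ * (s : B))
              + (E.δ₂ r : B) * (s : B) := by rw [E.R2₁, E.R2₂]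
        _ = ((E.σ₂₁ r : B) * E.y₁ + (E.σ₂₂ r : B) * E.y₂ + (E.δ₂ r : B)) * (s : B) := by
              noncomm_ring
        _ = (E.y₂ * (r : B)) * (s : B) := by rw [E.R2₂]
        _ = E.y₂ * ((r * s : A) : B) := by push_cast; rw [mul_assoc]
        _ = _ := by rw [E.R2₂]; push_cast; noncomm_ring
    obtain ⟨-, e1, e2, -⟩ := E.coeffs_eq key
    exact ⟨e1.symm, e2.symm⟩

lemma amul (r s : A) : E.σ₁₁ (r * s) = E.σ₁₁ r * E.σ₁₁ s + E.σ₁₂ r * E.σ₂₁ s :=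
  (E.sigma_mul 0 r s).1
lemma bmul (r s : A) : E.σ₁₂ (r * s) = E.σ₁₁ r * E.σ₁₂ s + E.σ₁₂ r * E.σ₂₂ s :=
  (E.sigma_mul 0 r s).2
lemma cmul (r s : A) : E.σ₂₁ (r * s) = E.σ₂₁ r * E.σ₁₁ s + E.σ₂₂ r * E.σ₂₁ s :=
  (E.sigma_mul 1 r s).1
lemma dmul (r s : A) : E.σ₂₂ (r * s) = E.σ₂₁ r * E.σ₁₂ s + E.σ₂₂ r * E.σ₂₂ s :=
  (E.sigma_mul 1 r s).2

end RightDoubleExtension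

namespace RightDoubleExtension

variable {k : Type*} [Field k] {B : Type*} [Ring B] [Algebra k B]
  {A : Subalgebra k B} (E : RightDoubleExtension k A)

noncomputable def XX : A →ₗ[k] A := E.σ₂₂ + (E.p₁₁ * E.p₁₂⁻¹) • E.σ₁₂
noncomputable def YY : A →ₗ[k] A := (-E.p₁₂⁻¹) • E.σ₁₂
noncomputable def XX' : A →ₗ[k] A :=
  -(E.p₁₂ • E.σ₂₁) - E.p₁₁ • E.σ₁₁ + E.p₁₁ • E.σ₂₂ + (E.p₁₁ * E.p₁₁ * E.p₁₂⁻¹) • E.σ₁₂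
noncomputable def YY' : A →ₗ[k] A := E.σ₁₁ - (E.p₁₁ * E.p₁₂⁻¹) • E.σ₁₂
noncomputable def Dlin : A →ₗ[k] A :=
  -(E.p₁₁ • (E.σ₁₂ ∘ₗ E.σ₁₁)) + E.σ₂₂ ∘ₗ E.σ₁₁ - E.p₁₂ • (E.σ₁₂ ∘ₗ E.σ₂₁)


section
variable (hp : E.p₁₂ ≠ 0)
include hp

lemma idA (u : A) : E.σ₁₁ (E.XX u) + E.σ₂₁ (E.YY u) = E.Dlin u := by
  have hcb : E.σ₂₁ (E.σ₁₂ u)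
      = E.p₁₂ • (E.p₁₂ • E.σ₁₂ (E.σ₂₁ u) + E.σ₁₁ (E.σ₂₂ u))
        + E.p₁₁ • (E.p₁₂ • E.σ₁₂ (E.σ₁₁ u) + E.σ₁₁ (E.σ₁₂ u))
        - E.p₁₂ • E.σ₂₂ (E.σ₁₁ u) := eq_sub_of_add_eq' (E.rel2 u)
  simp only [XX, YY, Dlin, LinearMap.add_apply, LinearMap.smul_apply, LinearMap.neg_apply,
    LinearMap.sub_apply, LinearMap.comp_apply, map_add, map_smul, map_neg, map_sub]
  rw [hcb]
  match_scalars <;> field_simp <;> ring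

lemma idB (u : A) : E.σ₁₂ (E.XX u) + E.σ₂₂ (E.YY u) = 0 := by
  simp only [XX, YY, LinearMap.add_apply, LinearMap.smul_apply, map_add, map_smul]
  rw [E.rel1 u]
  match_scalars <;> field_simp <;> ring

lemma idC (u : A) : E.σ₁₁ (E.XX' u) + E.σ₂₁ (E.YY' u) = 0 := by
  have hcb : E.σ₂₁ (E.σ₁₂ u)
      = E.p₁₂ • (E.p₁₂ • E.σ₁₂ (E.σ₂₁ u) + E.σ₁₁ (E.σ₂₂ u))
        + E.p₁₁ • (E.p₁₂ • E.σ₁₂ (E.σ₁₁ u) + E.σ₁₁ (E.σ₁₂ u))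
        - E.p₁₂ • E.σ₂₂ (E.σ₁₁ u) := eq_sub_of_add_eq' (E.rel2 u)
  have hca : E.σ₂₁ (E.σ₁₁ u)
      = E.p₁₂ • (E.σ₁₁ (E.σ₂₁ u) + E.p₁₁ • E.σ₁₂ (E.σ₂₁ u))
        + E.p₁₁ • (E.σ₁₁ (E.σ₁₁ u) + E.p₁₁ • E.σ₁₂ (E.σ₁₁ u))
        - E.p₁₁ • E.σ₂₂ (E.σ₁₁ u) := eq_sub_of_add_eq (E.rel3 u)
  simp only [XX', YY', LinearMap.add_apply, LinearMap.smul_apply, LinearMap.neg_apply,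
    LinearMap.sub_apply, map_add, map_smul, map_neg, map_sub]
  rw [hcb, hca]
  match_scalars <;> field_simp <;> ring

lemma idD (u : A) : E.σ₁₂ (E.XX' u) + E.σ₂₂ (E.YY' u) = E.Dlin u := by
  simp only [XX', YY', Dlin, LinearMap.add_apply, LinearMap.smul_apply, LinearMap.neg_apply,
    LinearMap.sub_apply, LinearMap.comp_apply, map_add, map_smul, map_neg, map_sub]
  rw [E.rel1 u]
  match_scalars <;> field_simp <;> ring

lemma Xmul (u v : A) : E.XX (u * v) = E.XX u * E.XX v + E.XX' u * E.YY v := by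
  simp only [XX, XX', YY, LinearMap.add_apply, LinearMap.smul_apply, LinearMap.neg_apply,
    LinearMap.sub_apply]
  rw [E.bmul, E.dmul]
  simp only [smul_mul_assoc, mul_smul_comm, add_mul, mul_add, smul_smul, neg_mul, mul_neg,
    sub_mul, mul_sub, neg_smul, smul_neg, neg_neg]
  match_scalars <;> field_simp <;> ring

lemma Ymul (u v : A) : E.YY (u * v) = E.YY u * E.XX v + E.YY' u * E.YY v := by
  simp only [XX, YY, YY', LinearMap.add_apply, LinearMap.smul_apply, LinearMap.neg_apply,
    LinearMap.sub_apply]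
  rw [E.bmul]
  simp only [smul_mul_assoc, mul_smul_comm, add_mul, mul_add, smul_smul, neg_mul, mul_neg,
    sub_mul, mul_sub, neg_smul, smul_neg, neg_neg]
  match_scalars <;> field_simp <;> ring

lemma X'mul (u v : A) : E.XX' (u * v) = E.XX u * E.XX' v + E.XX' u * E.YY' v := by
  simp only [XX, XX', YY', LinearMap.add_apply, LinearMap.smul_apply, LinearMap.neg_apply,
    LinearMap.sub_apply]
  rw [E.amul, E.bmul, E.cmul, E.dmul]
  simp only [smul_mul_assoc, mul_smul_comm, add_mul, mul_add, smul_smul, neg_mul, mul_neg,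
    sub_mul, mul_sub, neg_smul, smul_neg, neg_neg]
  match_scalars <;> field_simp <;> ring

lemma Y'mul (u v : A) : E.YY' (u * v) = E.YY u * E.XX' v + E.YY' u * E.YY' v := by
  simp only [XX, XX', YY, YY', LinearMap.add_apply, LinearMap.smul_apply, LinearMap.neg_apply,
    LinearMap.sub_apply]
  rw [E.amul, E.bmul]
  simp only [smul_mul_assoc, mul_smul_comm, add_mul, mul_add, smul_smul, neg_mul, mul_neg,
    sub_mul, mul_sub, neg_smul, smul_neg, neg_neg]
  match_scalars <;> field_simp <;> ring

lemma Dmul (u v : A) : E.Dlin (u * v) = E.Dlin u * E.Dlin v := by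
  have e1 : E.σ₂₂ (E.YY u) = -E.σ₁₂ (E.XX u) :=
    eq_neg_of_add_eq_zero_right (E.idB hp u)
  have e2 : E.σ₂₁ (E.YY' u) = -E.σ₁₁ (E.XX' u) :=
    eq_neg_of_add_eq_zero_right (E.idC hp u)
  have e3 : E.σ₂₂ (E.YY' u) = E.Dlin u - E.σ₁₂ (E.XX' u) :=
    eq_sub_of_add_eq' (E.idD hp u)
  calc E.Dlin (u * v) = E.σ₁₁ (E.XX (u * v)) + E.σ₂₁ (E.YY (u * v)) := (E.idA hp (u * v)).symm
    _ = E.σ₁₁ (E.XX u * E.XX v + E.XX' u * E.YY v)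
        + E.σ₂₁ (E.YY u * E.XX v + E.YY' u * E.YY v) := by rw [E.Xmul hp, E.Ymul hp]
    _ = (E.σ₁₁ (E.XX u) * E.σ₁₁ (E.XX v) + E.σ₁₂ (E.XX u) * E.σ₂₁ (E.XX v))
        + (E.σ₁₁ (E.XX' u) * E.σ₁₁ (E.YY v) + E.σ₁₂ (E.XX' u) * E.σ₂₁ (E.YY v))
        + ((E.σ₂₁ (E.YY u) * E.σ₁₁ (E.XX v) + E.σ₂₂ (E.YY u) * E.σ₂₁ (E.XX v))
        + (E.σ₂₁ (E.YY' u) * E.σ₁₁ (E.YY v) + E.σ₂₂ (E.YY' u) * E.σ₂₁ (E.YY v))) := by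
        rw [map_add, map_add, E.amul, E.amul, E.cmul, E.cmul]
    _ = E.Dlin u * E.Dlin v := by
        rw [e1, e2, e3, ← E.idA hp u, ← E.idA hp v]
        noncomm_ring

omit hp in
lemma Done : E.Dlin 1 = 1 := by
  obtain ⟨h1, h2, h3, h4⟩ := E.sigma_one
  simp [Dlin, h1, h2, h3, h4]

end

end RightDoubleExtension

open RightDoubleExtension in
/-- If `p₁₂ ≠ 0` and `det σ` is bijective, then `σ` has a right inverse: a `k`-algebra
homomorphism `φ = (φᵢⱼ) : A → M₂(A)` with `σ₁ⱼ(φ₁ᵢ(r)) + σ₂ⱼ(φ₂ᵢ(r)) = δᵢⱼ · r`. -/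
theorem sigma_has_right_inverse
    {k : Type*} [Field k] {B : Type*} [Ring B] [Algebra k B]
    {A : Subalgebra k B} (E : RightDoubleExtension k A)
    (hp : E.p₁₂ ≠ 0) (hdet : Function.Bijective E.detσ) :
    ∃ φ₁₁ φ₁₂ φ₂₁ φ₂₂ : A →ₗ[k] A,
      (φ₁₁ 1 = 1 ∧ φ₁₂ 1 = 0 ∧ φ₂₁ 1 = 0 ∧ φ₂₂ 1 = 1) ∧
      (∀ r s : A,
        φ₁₁ (r * s) = φ₁₁ r * φ₁₁ s + φ₁₂ r * φ₂₁ s ∧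
        φ₁₂ (r * s) = φ₁₁ r * φ₁₂ s + φ₁₂ r * φ₂₂ s ∧
        φ₂₁ (r * s) = φ₂₁ r * φ₁₁ s + φ₂₂ r * φ₂₁ s ∧
        φ₂₂ (r * s) = φ₂₁ r * φ₁₂ s + φ₂₂ r * φ₂₂ s) ∧
      (∀ r : A,
        E.σ₁₁ (φ₁₁ r) + E.σ₂₁ (φ₂₁ r) = r ∧
        E.σ₁₂ (φ₁₁ r) + E.σ₂₂ (φ₂₁ r) = 0 ∧
        E.σ₁₁ (φ₁₂ r) + E.σ₂₁ (φ₂₂ r) = 0 ∧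
        E.σ₁₂ (φ₁₂ r) + E.σ₂₂ (φ₂₂ r) = r) := by
  have hcoe : ⇑E.Dlin = E.detσ := funext fun r => rfl
  have hD : Function.Bijective ⇑E.Dlin := by rw [hcoe]; exact hdet
  set eqv := LinearEquiv.ofBijective E.Dlin hD with heqv
  have hDinv : ∀ r : A, E.Dlin (eqv.symm r) = r := fun r => by
    have := eqv.apply_symm_apply r
    simpa [heqv, LinearEquiv.ofBijective_apply] using this
  have hone : eqv.symm 1 = 1 := by
    apply hD.injective
    rw [hDinv, E.Done]
  have hmul : ∀ r s : A, eqv.symm (r * s) = eqv.symm r * eqv.symm s := by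
    intro r s
    apply hD.injective
    rw [hDinv, E.Dmul hp, hDinv, hDinv]
  obtain ⟨h1, h2, h3, h4⟩ := E.sigma_one
  refine ⟨E.XX ∘ₗ eqv.symm.toLinearMap, E.XX' ∘ₗ eqv.symm.toLinearMap,
    E.YY ∘ₗ eqv.symm.toLinearMap, E.YY' ∘ₗ eqv.symm.toLinearMap, ⟨?_, ?_, ?_, ?_⟩, ?_, ?_⟩
  · simp [hone, XX, h2, h4]
  · simp only [LinearMap.comp_apply, LinearEquiv.coe_coe, hone]
    simp [XX', h1, h2, h3, h4]
  · simp [hone, YY, h2]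
  · simp [hone, YY', h1, h2]
  · intro r s
    simp only [LinearMap.comp_apply, LinearEquiv.coe_coe, hmul r s]
    exact ⟨E.Xmul hp _ _, E.X'mul hp _ _, E.Ymul hp _ _, E.Y'mul hp _ _⟩
  · intro r
    simp only [LinearMap.comp_apply, LinearEquiv.coe_coe]
    refine ⟨?_, E.idB hp _, E.idC hp _, ?_⟩
    · rw [E.idA hp, hDinv]
    · rw [E.idD hp, hDinv]
end
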